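/- arXiv:2403.04089 — 7 statements merged into one kernel-verified Lean document; each statement's English description precedes it below -/
import Mathlib

section
/- Let L > 0 and let a : ℝ → ℝ be continuously differentiable on [0,L] with a(0) = a(L) = 0 and a(s) > 0 for all s ∈ (0,L). Then the function φ : (0,L) → ℝ defined by φ(s) = exp(∫_{L/2}^s 1/a(u) du) is a strictly increasing continuous bijection from the open interval (0,L) onto (0,∞). -/
/-- Lemma 2.26: the map `φ(s) = exp(∫_{L/2}^s 1/a(u) du)` is a strictly increasing
continuous bijection from `(0, L)` onto `(0, ∞)`. -/
theorem stmt_0 (L : ℝ) (hL : 0 < L) (a : ℝ → ℝ)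
    (ha : ContDiffOn ℝ 1 a (Set.Icc 0 L))
    (ha0 : a 0 = 0) (haL : a L = 0)
    (hapos : ∀ s ∈ Set.Ioo 0 L, 0 < a s)
    (φ : ℝ → ℝ)
    (hφ : ∀ s, φ s = Real.exp (∫ u in (L/2)..s, 1 / a u)) :
    StrictMonoOn φ (Set.Ioo 0 L) ∧ ContinuousOn φ (Set.Ioo 0 L) ∧
      Set.BijOn φ (Set.Ioo 0 L) (Set.Ioi 0) := by
  set f : ℝ → ℝ := fun u => 1 / a u with hfdef
  set ψ : ℝ → ℝ := fun s => ∫ u in (L/2)..s, f u with hψdef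
  have hφψ : ∀ s, φ s = Real.exp (ψ s) := hφ
  have hmem : L/2 ∈ Set.Ioo 0 L := ⟨by linarith, by linarith⟩
  have hacont : ContinuousOn a (Set.Icc 0 L) := ha.continuousOn
  have hfcont : ContinuousOn f (Set.Ioo 0 L) :=
    continuousOn_const.div (hacont.mono Set.Ioo_subset_Icc_self)
      (fun x hx => (hapos x hx).ne')
  have hint : ∀ s ∈ Set.Ioo 0 L, ∀ t ∈ Set.Ioo 0 L,
      IntervalIntegrable f MeasureTheory.volume s t := fun s hs t ht =>
    (hfcont.mono (Set.ordConnected_Ioo.uIcc_subset hs ht)).intervalIntegrable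
  have hψdiff : ∀ s ∈ Set.Ioo 0 L, ∀ t ∈ Set.Ioo 0 L,
      ψ t - ψ s = ∫ u in s..t, f u := by
    intro s hs t ht
    have h := intervalIntegral.integral_add_adjacent_intervals
      (hint _ hmem _ hs) (hint _ hs _ ht)
    simp only [hψdef]
    linarith
  have hψmono : StrictMonoOn ψ (Set.Ioo 0 L) := by
    intro s hs t ht hst
    have hpos : 0 < ∫ u in s..t, f u := by
      apply intervalIntegral.intervalIntegral_pos_of_pos_on (hint _ hs _ ht) _ hst
      intro x hx
      have hx' : x ∈ Set.Ioo 0 L := ⟨lt_trans hs.1 hx.1, lt_trans hx.2 ht.2⟩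
      exact one_div_pos.mpr (hapos x hx')
    have h := hψdiff s hs t ht
    linarith
  have hψderiv : ∀ x ∈ Set.Ioo 0 L, HasDerivAt ψ (f x) x := by
    intro x hx
    exact intervalIntegral.integral_hasDerivAt_right (hint _ hmem _ hx)
      (hfcont.stronglyMeasurableAtFilter isOpen_Ioo x hx)
      (hfcont.continuousAt (isOpen_Ioo.mem_nhds hx))
  have hψcont : ContinuousOn ψ (Set.Ioo 0 L) :=
    fun x hx => ((hψderiv x hx).continuousAt).continuousWithinAt
  have hφcont : ContinuousOn φ (Set.Ioo 0 L) :=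
    (Real.continuous_exp.comp_continuousOn hψcont).congr (fun s _ => hφψ s)
  have hφmono : StrictMonoOn φ (Set.Ioo 0 L) := by
    intro s hs t ht hst
    rw [hφψ, hφψ]
    exact Real.exp_lt_exp.mpr (hψmono hs ht hst)
  -- Lipschitz bound on a
  have hdiffa : DifferentiableOn ℝ a (Set.Icc 0 L) := ha.differentiableOn one_ne_zero
  have hderivcont : ContinuousOn (derivWithin a (Set.Icc 0 L)) (Set.Icc 0 L) :=
    ha.continuousOn_derivWithin (uniqueDiffOn_Icc hL) le_rfl
  obtain ⟨C, hC⟩ := isCompact_Icc.exists_bound_of_continuousOn hderivcont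
  set M : ℝ := max C 1 with hMdef
  have hM0 : (0:ℝ) < M := lt_of_lt_of_le one_pos (le_max_right _ _)
  have hlip : ∀ x ∈ Set.Icc 0 L, ∀ y ∈ Set.Icc 0 L, ‖a y - a x‖ ≤ M * ‖y - x‖ :=
    fun x hx y hy => Convex.norm_image_sub_le_of_norm_derivWithin_le hdiffa
      (fun z hz => le_trans (hC z hz) (le_max_left _ _)) (convex_Icc 0 L) hx hy
  have haub1 : ∀ u ∈ Set.Ioo 0 L, a u ≤ M * u := by
    intro u hu
    have h := hlip 0 ⟨le_rfl, hL.le⟩ u ⟨hu.1.le, hu.2.le⟩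
    rw [ha0, sub_zero, sub_zero, Real.norm_eq_abs, Real.norm_eq_abs,
      abs_of_pos (hapos u hu), abs_of_pos hu.1] at h
    exact h
  have haub2 : ∀ u ∈ Set.Ioo 0 L, a u ≤ M * (L - u) := by
    intro u hu
    have h := hlip L ⟨hL.le, le_rfl⟩ u ⟨hu.1.le, hu.2.le⟩
    rw [haL, sub_zero, Real.norm_eq_abs, Real.norm_eq_abs,
      abs_of_pos (hapos u hu), abs_of_neg (by linarith [hu.2] : u - L < 0)] at h
    simpa [neg_sub] using h
  -- divergence of the integral near 0
  have hleft : ∀ ε ∈ Set.Ioc 0 (L/2),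
      (Real.log (L/2) - Real.log ε) / M ≤ ∫ u in ε..(L/2), f u := by
    intro ε hε
    have hεIoo : ε ∈ Set.Ioo 0 L := ⟨hε.1, lt_of_le_of_lt hε.2 (by linarith)⟩
    have hg : ∀ u ∈ Set.Icc ε (L/2), M⁻¹ * u⁻¹ ≤ f u := by
      intro u hu
      have huIoo : u ∈ Set.Ioo 0 L :=
        ⟨lt_of_lt_of_le hε.1 hu.1, lt_of_le_of_lt hu.2 (by linarith)⟩
      have h2 : 0 < a u := hapos u huIoo
      have := inv_anti₀ h2 (haub1 u huIoo)
      calc M⁻¹ * u⁻¹ = (M * u)⁻¹ := (mul_inv M u).symm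
        _ ≤ (a u)⁻¹ := this
        _ = f u := (one_div (a u)).symm
    have hgint : IntervalIntegrable (fun u => M⁻¹ * u⁻¹) MeasureTheory.volume ε (L/2) := by
      apply ContinuousOn.intervalIntegrable
      apply continuousOn_const.mul
      apply ContinuousOn.inv₀ continuousOn_id
      intro x hx
      rw [Set.uIcc_of_le hε.2] at hx
      exact ne_of_gt (lt_of_lt_of_le hε.1 hx.1)
    have hmono := intervalIntegral.integral_mono_on hε.2 hgint (hint _ hεIoo _ hmem) hg
    have hcalc : ∫ u in ε..(L/2), M⁻¹ * u⁻¹ = (Real.log (L/2) - Real.log ε) / M := by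
      rw [intervalIntegral.integral_const_mul, integral_inv_of_pos hε.1 (by linarith : (0:ℝ) < L/2),
        Real.log_div (by linarith : (L:ℝ)/2 ≠ 0) (ne_of_gt hε.1)]
      ring
    rw [hcalc] at hmono
    exact hmono
  -- divergence of the integral near L
  have hright : ∀ δ ∈ Set.Ioc 0 (L/2),
      (Real.log (L/2) - Real.log δ) / M ≤ ∫ u in (L/2)..(L - δ), f u := by
    intro δ hδ
    have hsIoo : L - δ ∈ Set.Ioo 0 L := ⟨by linarith [hδ.2], by linarith [hδ.1]⟩
    have hle : L/2 ≤ L - δ := by linarith [hδ.2]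
    have hg : ∀ u ∈ Set.Icc (L/2) (L - δ), M⁻¹ * (L - u)⁻¹ ≤ f u := by
      intro u hu
      have huIoo : u ∈ Set.Ioo 0 L :=
        ⟨lt_of_lt_of_le (by linarith) hu.1, lt_of_le_of_lt hu.2 (by linarith [hδ.1])⟩
      have h2 : 0 < a u := hapos u huIoo
      have := inv_anti₀ h2 (haub2 u huIoo)
      calc M⁻¹ * (L - u)⁻¹ = (M * (L - u))⁻¹ := (mul_inv M (L - u)).symm
        _ ≤ (a u)⁻¹ := this
        _ = f u := (one_div (a u)).symm
    have hgint : IntervalIntegrable (fun u => M⁻¹ * (L - u)⁻¹)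
        MeasureTheory.volume (L/2) (L - δ) := by
      apply ContinuousOn.intervalIntegrable
      apply continuousOn_const.mul
      apply ContinuousOn.inv₀ (continuousOn_const.sub continuousOn_id)
      intro x hx
      rw [Set.uIcc_of_le hle] at hx
      have : δ ≤ L - x := by linarith [hx.2]
      exact ne_of_gt (lt_of_lt_of_le hδ.1 this)
    have hmono := intervalIntegral.integral_mono_on hle hgint (hint _ hmem _ hsIoo) hg
    have hcalc : ∫ u in (L/2)..(L - δ), M⁻¹ * (L - u)⁻¹
        = (Real.log (L/2) - Real.log δ) / M := by
      rw [intervalIntegral.integral_const_mul]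
      have hcs := intervalIntegral.integral_comp_sub_left (fun x : ℝ => x⁻¹) L
        (a := L/2) (b := L - δ)
      rw [hcs]
      have : L - (L - δ) = δ := by ring
      rw [this, (by ring : L - L/2 = L/2),
        integral_inv_of_pos hδ.1 (by linarith : (0:ℝ) < L/2),
        Real.log_div (by linarith : (L:ℝ)/2 ≠ 0) (ne_of_gt hδ.1)]
      ring
    rw [hcalc] at hmono
    exact hmono
  have hψhalf : ψ (L/2) = 0 := intervalIntegral.integral_same
  -- surjectivity
  have hmaps : Set.MapsTo φ (Set.Ioo 0 L) (Set.Ioi 0) := by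
    intro s _
    rw [Set.mem_Ioi, hφψ]
    exact Real.exp_pos _
  have hsurj : Set.SurjOn φ (Set.Ioo 0 L) (Set.Ioi 0) := by
    intro y hy
    have hy0 : 0 < y := hy
    set T : ℝ := Real.log y with hTdef
    -- left endpoint
    set ε : ℝ := min (L/2) ((L/2) * Real.exp (M * T)) with hεdef
    have hε0 : 0 < ε := lt_min (by linarith) (by positivity)
    have hεle : ε ≤ L/2 := min_le_left _ _
    have hεIoo : ε ∈ Set.Ioo 0 L := ⟨hε0, by linarith⟩
    have h1 : ψ ε ≤ T := by
      have hI := hleft ε ⟨hε0, hεle⟩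
      have hψε : ψ ε = -∫ u in ε..(L/2), f u := by
        have h := hψdiff ε hεIoo (L/2) hmem
        linarith [hψhalf]
      have hlog : Real.log ε ≤ Real.log (L/2) + M * T := by
        calc Real.log ε ≤ Real.log ((L/2) * Real.exp (M * T)) :=
            Real.log_le_log hε0 (min_le_right _ _)
          _ = Real.log (L/2) + M * T := by
            rw [Real.log_mul (by linarith : (L:ℝ)/2 ≠ 0) (Real.exp_ne_zero _),
              Real.log_exp]
      have hge : -T ≤ (Real.log (L/2) - Real.log ε) / M := by
        rw [le_div_iff₀ hM0]
        nlinarith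
      linarith
    -- right endpoint
    set δ : ℝ := min (L/2) ((L/2) * Real.exp (-(M * T))) with hδdef
    have hδ0 : 0 < δ := lt_min (by linarith) (by positivity)
    have hδle : δ ≤ L/2 := min_le_left _ _
    have hsIoo : L - δ ∈ Set.Ioo 0 L := ⟨by linarith, by linarith⟩
    have h2 : T ≤ ψ (L - δ) := by
      have hI := hright δ ⟨hδ0, hδle⟩
      have hψs : ψ (L - δ) = ∫ u in (L/2)..(L - δ), f u := by
        have h := hψdiff (L/2) hmem (L - δ) hsIoo
        linarith [hψhalf]
      have hlog : Real.log δ ≤ Real.log (L/2) - M * T := by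
        calc Real.log δ ≤ Real.log ((L/2) * Real.exp (-(M * T))) :=
            Real.log_le_log hδ0 (min_le_right _ _)
          _ = Real.log (L/2) - M * T := by
            rw [Real.log_mul (by linarith : (L:ℝ)/2 ≠ 0) (Real.exp_ne_zero _),
              Real.log_exp]
            ring
      have hge : T ≤ (Real.log (L/2) - Real.log δ) / M := by
        rw [le_div_iff₀ hM0]
        nlinarith
      linarith
    -- intermediate value theorem
    have hεs : ε ≤ L - δ := by linarith
    have hIccsub : Set.Icc ε (L - δ) ⊆ Set.Ioo 0 L := by
      intro x hx
      exact ⟨lt_of_lt_of_le hε0 hx.1, lt_of_le_of_lt hx.2 (by linarith)⟩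
    have hIVT := intermediate_value_Icc hεs (hψcont.mono hIccsub)
    obtain ⟨x, hx, hψx⟩ := hIVT ⟨h1, h2⟩
    refine ⟨x, hIccsub hx, ?_⟩
    rw [hφψ, hψx, hTdef, Real.exp_log hy0]
  exact ⟨hφmono, hφcont, hmaps, hφmono.injOn, hsurj⟩
end

section
/- Let L > 0 and let a : ℝ → ℝ be continuously differentiable on [0,L] with a(0) = a(L) = 0 and a(s) > 0 for all s ∈ (0,L). Then ∫_{L/2}^s 1/a(u) du tends to +∞ as s tends to L from the left, and tends to −∞ as s tends to 0 from the right. -/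
open Filter Set MeasureTheory intervalIntegral Real

/-- The key divergence step in Lemma 2.26: `∫_{L/2}^s 1/a(u) du → +∞` as `s → L⁻`
and `→ -∞` as `s → 0⁺`. -/
theorem stmt_1 (L : ℝ) (hL : 0 < L) (a : ℝ → ℝ)
    (ha : ContDiffOn ℝ 1 a (Set.Icc 0 L))
    (ha0 : a 0 = 0) (haL : a L = 0)
    (hapos : ∀ s ∈ Set.Ioo 0 L, 0 < a s) :
    Filter.Tendsto (fun s => ∫ u in (L/2)..s, 1 / a u)
        (nhdsWithin L (Set.Iio L)) Filter.atTop ∧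
      Filter.Tendsto (fun s => ∫ u in (L/2)..s, 1 / a u)
        (nhdsWithin 0 (Set.Ioi 0)) Filter.atBot := by
  have hL2 : 0 < L / 2 := by linarith
  have hL2' : L / 2 < L := by linarith
  -- bound on the derivative
  obtain ⟨C0, hC0⟩ := isCompact_Icc.exists_bound_of_continuousOn
    (ha.continuousOn_derivWithin (uniqueDiffOn_Icc hL) le_rfl)
  set C : ℝ := max C0 1 with hCdef
  have hC : 0 < C := lt_of_lt_of_le one_pos (le_max_right _ _)
  have hdiff : DifferentiableOn ℝ a (Icc 0 L) := ha.differentiableOn one_ne_zero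
  have hlip : ∀ x ∈ Icc 0 L, ∀ y ∈ Icc 0 L, ‖a y - a x‖ ≤ C * ‖y - x‖ := by
    intro x hx y hy
    exact (convex_Icc 0 L).norm_image_sub_le_of_norm_derivWithin_le hdiff
      (fun z hz => le_trans (hC0 z hz) (le_max_left _ _)) hx hy
  have hcont : ContinuousOn a (Icc 0 L) := ha.continuousOn
  -- bounds a u ≤ C (L - u) and a u ≤ C u
  have hubL : ∀ u ∈ Icc 0 L, a u ≤ C * (L - u) := by
    intro u hu
    have h := hlip L (right_mem_Icc.2 hL.le) u hu
    rw [haL, sub_zero] at h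
    calc a u ≤ ‖a u‖ := le_abs_self _
      _ ≤ C * ‖u - L‖ := h
      _ = C * (L - u) := by rw [Real.norm_eq_abs, abs_sub_comm, abs_of_nonneg (by linarith [hu.2])]
  have hub0 : ∀ u ∈ Icc 0 L, a u ≤ C * u := by
    intro u hu
    have h := hlip 0 (left_mem_Icc.2 hL.le) u hu
    rw [ha0, sub_zero, sub_zero] at h
    calc a u ≤ ‖a u‖ := le_abs_self _
      _ ≤ C * ‖u‖ := h
      _ = C * u := by rw [Real.norm_eq_abs, abs_of_nonneg hu.1]
  -- integrability of 1/a on compact subintervals of (0, L)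
  have hint : ∀ x y, 0 < x → y < L → x ≤ y →
      IntervalIntegrable (fun u => 1 / a u) volume x y := by
    intro x y hx hy hxy
    apply ContinuousOn.intervalIntegrable
    rw [uIcc_of_le hxy]
    apply ContinuousOn.div continuousOn_const
      (hcont.mono (fun z hz => ⟨by linarith [hz.1], by linarith [hz.2]⟩))
    intro z hz
    exact (hapos z ⟨lt_of_lt_of_le hx hz.1, lt_of_le_of_lt hz.2 hy⟩).ne'
  constructor
  · -- s → L⁻
    refine tendsto_atTop_mono' _ (f₁ := fun s => C⁻¹ * Real.log ((L/2) / (L - s))) ?_ ?_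
    · -- eventual inequality
      filter_upwards [Ioo_mem_nhdsLT_of_mem ⟨hL2', le_rfl⟩] with s hs
      have hs1 : L / 2 < s := hs.1
      have hs2 : s < L := hs.2
      -- compute the comparison integral
      have hne : (0:ℝ) ∉ Set.uIcc (L - s) (L/2) := by
        rw [uIcc_of_le (by linarith)]
        intro h; exact absurd h.1 (by push_neg; linarith)
      have hcomp : (∫ u in (L/2)..s, (C * (L - u))⁻¹)
          = C⁻¹ * Real.log ((L/2) / (L - s)) := by
        have : (fun u : ℝ => (C * (L - u))⁻¹) = fun u => C⁻¹ * (1 / (L - u)) := by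
          funext u; rw [mul_inv]; ring
        rw [this, intervalIntegral.integral_const_mul,
          intervalIntegral.integral_comp_sub_left (fun x => 1 / x) L,
          show L - L / 2 = L / 2 from by ring, integral_one_div hne]
      rw [← hcomp]
      apply intervalIntegral.integral_mono_on (by linarith)
      · apply ContinuousOn.intervalIntegrable
        rw [uIcc_of_le (by linarith)]
        apply ContinuousOn.inv₀ (by fun_prop)
        intro z hz
        have : L - z > 0 := by linarith [hz.2]
        positivity
      · exact hint (L/2) s hL2 hs2 (by linarith)
      · intro u hu
        have hu0 : 0 < u := lt_of_lt_of_le hL2 hu.1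
        have huL : u < L := lt_of_le_of_lt hu.2 hs2
        have hau : 0 < a u := hapos u ⟨hu0, huL⟩
        rw [one_div]
        apply inv_anti₀ hau
        exact hubL u ⟨hu0.le, huL.le⟩
    · -- the lower bound tends to atTop
      apply Tendsto.const_mul_atTop (inv_pos.2 hC)
      apply Real.tendsto_log_atTop.comp
      have h1 : Tendsto (fun s : ℝ => L - s) (nhdsWithin L (Iio L)) (nhdsWithin 0 (Ioi 0)) := by
        apply tendsto_nhdsWithin_of_tendsto_nhds_of_eventually_within
        · have : Tendsto (fun s : ℝ => L - s) (nhds L) (nhds (L - L)) :=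
            (tendsto_const_nhds.sub tendsto_id)
          simpa using this.mono_left nhdsWithin_le_nhds
        · filter_upwards [self_mem_nhdsWithin] with s hs
          simp only [mem_Ioi]; exact sub_pos.2 hs
      have h2 : Tendsto (fun s : ℝ => (L/2) / (L - s)) (nhdsWithin L (Iio L)) atTop := by
        simp only [div_eq_mul_inv]
        exact Tendsto.const_mul_atTop hL2 (tendsto_inv_nhdsGT_zero.comp h1)
      exact h2
  · -- s → 0⁺
    refine tendsto_atBot_mono' _ (f₁ := fun s => -(C⁻¹ * Real.log ((L/2) / s))) ?_ ?_
    · filter_upwards [Ioo_mem_nhdsGT_of_mem ⟨le_rfl, hL2⟩] with s hs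
      have hs1 : 0 < s := hs.1
      have hs2 : s < L / 2 := hs.2
      have hne : (0:ℝ) ∉ Set.uIcc s (L/2) := by
        rw [uIcc_of_le (by linarith)]
        intro h; exact absurd h.1 (by push_neg; linarith)
      have hcomp : (∫ u in s..(L/2), (C * u)⁻¹) = C⁻¹ * Real.log ((L/2) / s) := by
        have : (fun u : ℝ => (C * u)⁻¹) = fun u => C⁻¹ * (1 / u) := by
          funext u; rw [mul_inv]; ring
        rw [this, intervalIntegral.integral_const_mul, integral_one_div hne]
      have hflip : (∫ u in (L/2)..s, 1 / a u) = -(∫ u in s..(L/2), 1 / a u) := by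
        rw [intervalIntegral.integral_symm]
      rw [hflip, ← hcomp, neg_le_neg_iff]
      apply intervalIntegral.integral_mono_on (by linarith)
      · apply ContinuousOn.intervalIntegrable
        rw [uIcc_of_le (by linarith)]
        apply ContinuousOn.inv₀ (by fun_prop)
        intro z hz
        have : 0 < z := lt_of_lt_of_le hs1 hz.1
        positivity
      · exact hint s (L/2) hs1 hL2' (by linarith)
      · intro u hu
        have hu0 : 0 < u := lt_of_lt_of_le hs1 hu.1
        have huL : u < L := lt_of_le_of_lt hu.2 (by linarith)
        have hau : 0 < a u := hapos u ⟨hu0, huL⟩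
        rw [one_div]
        apply inv_anti₀ hau
        exact hub0 u ⟨hu0.le, huL.le⟩
    · rw [tendsto_neg_atBot_iff]
      apply Tendsto.const_mul_atTop (inv_pos.2 hC)
      apply Real.tendsto_log_atTop.comp
      simp only [div_eq_mul_inv]
      exact Tendsto.const_mul_atTop hL2 tendsto_inv_nhdsGT_zero
end

section
/- Let L > 0 and let a : ℝ → ℝ be continuous and strictly positive on (0,L). Define τ : (0,L) → ℝ by τ(s) = arctan(φ(s)), where φ(s) = exp(∫_{L/2}^s 1/a(u) du). Then τ satisfies a(s)·τ'(s) = (1/2)·sin(2τ(s)) for all s ∈ (0,L) and τ(L/2) = π/4. If in addition a is continuously differentiable on [0,L] with a(0) = a(L) = 0, then τ is a strictly increasing continuous bijection from (0,L) onto (0,π/2). -/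
open Real Set MeasureTheory intervalIntegral

/-- From the proof of Lemma 2.28: `τ(s) = arctan(φ(s))` solves
`a(s) τ'(s) = (1/2) sin(2 τ(s))` with `τ(L/2) = π/4`; and if moreover `a` is `C¹` on
`[0, L]` with `a(0) = a(L) = 0`, then `τ` is a strictly increasing continuous bijection
from `(0, L)` onto `(0, π/2)`. -/
theorem stmt_3 (L : ℝ) (hL : 0 < L) (a : ℝ → ℝ)
    (ha : ContinuousOn a (Set.Ioo 0 L))
    (hapos : ∀ s ∈ Set.Ioo 0 L, 0 < a s)
    (φ τ : ℝ → ℝ)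
    (hφ : ∀ s, φ s = Real.exp (∫ u in (L/2)..s, 1 / a u))
    (hτ : ∀ s, τ s = Real.arctan (φ s)) :
    ((∀ s ∈ Set.Ioo 0 L, DifferentiableAt ℝ τ s ∧
          a s * deriv τ s = (1/2) * Real.sin (2 * τ s)) ∧
        τ (L/2) = Real.pi / 4) ∧
      (ContDiffOn ℝ 1 a (Set.Icc 0 L) → a 0 = 0 → a L = 0 →
        StrictMonoOn τ (Set.Ioo 0 L) ∧ ContinuousOn τ (Set.Ioo 0 L) ∧
          Set.BijOn τ (Set.Ioo 0 L) (Set.Ioo 0 (Real.pi / 2))) := by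
  have hmem : L/2 ∈ Set.Ioo 0 L := ⟨by linarith, by linarith⟩
  set g : ℝ → ℝ := fun u => 1 / a u with hgdef
  set F : ℝ → ℝ := fun s => ∫ u in (L/2)..s, g u with hFdef
  have hgcont : ContinuousOn g (Set.Ioo 0 L) :=
    continuousOn_const.div ha (fun s hs => (hapos s hs).ne')
  have hgpos : ∀ s ∈ Set.Ioo 0 L, 0 < g s := fun s hs => by
    simpa [hgdef] using (hapos s hs)
  have hint : ∀ s ∈ Set.Ioo 0 L, IntervalIntegrable g MeasureTheory.volume (L/2) s := fun s hs =>
    (hgcont.mono (Set.ordConnected_Ioo.uIcc_subset hmem hs)).intervalIntegrable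
  have hFderiv : ∀ s ∈ Set.Ioo 0 L, HasDerivAt F (g s) s := fun s hs =>
    intervalIntegral.integral_hasDerivAt_right (hint s hs)
      (hgcont.stronglyMeasurableAtFilter isOpen_Ioo s hs)
      (hgcont.continuousAt (isOpen_Ioo.mem_nhds hs))
  have hτeq : ∀ s, τ s = Real.arctan (Real.exp (F s)) := fun s => by
    rw [hτ s, hφ s]
  have hτf : τ = fun s => Real.arctan (Real.exp (F s)) := funext hτeq
  have hτderiv : ∀ s ∈ Set.Ioo 0 L,
      HasDerivAt τ (Real.exp (F s) / (1 + Real.exp (F s) ^ 2) * g s) s := by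
    intro s hs
    have h1 : HasDerivAt (fun x => Real.exp (F x)) (Real.exp (F s) * g s) s :=
      (Real.hasDerivAt_exp (F s)).comp s (hFderiv s hs)
    have h2 : HasDerivAt (fun x => Real.arctan (Real.exp (F x)))
        (1 / (1 + Real.exp (F s) ^ 2) * (Real.exp (F s) * g s)) s :=
      by have := (Real.hasDerivAt_arctan (Real.exp (F s))).comp s h1; exact this
    rw [hτf]
    convert h2 using 1; ring
  have hτcont : ContinuousOn τ (Set.Ioo 0 L) := fun s hs =>
    ((hτderiv s hs).differentiableAt.continuousAt).continuousWithinAt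
  have hτmono : StrictMonoOn τ (Set.Ioo 0 L) := by
    apply strictMonoOn_of_deriv_pos (convex_Ioo 0 L) hτcont
    intro x hx
    rw [interior_Ioo] at hx
    rw [(hτderiv x hx).deriv]
    have h1 := hgpos x hx
    have h2 : (0:ℝ) < Real.exp (F x) / (1 + Real.exp (F x) ^ 2) := by positivity
    exact mul_pos h2 h1
  constructor
  · constructor
    · intro s hs
      refine ⟨(hτderiv s hs).differentiableAt, ?_⟩
      rw [(hτderiv s hs).deriv, hτeq s]
      set x := Real.exp (F s) with hx
      have hx0 : 0 < x := Real.exp_pos _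
      have h1x : (0:ℝ) < 1 + x^2 := by positivity
      rw [Real.sin_two_mul, Real.sin_arctan, Real.cos_arctan]
      have hss : Real.sqrt (1 + x^2) ^ 2 = 1 + x^2 := Real.sq_sqrt h1x.le
      have hsq : (0:ℝ) < Real.sqrt (1 + x^2) := Real.sqrt_pos.2 h1x
      have ha0 : a s ≠ 0 := (hapos s hs).ne'
      field_simp [hgdef]
      have hag : a s * g s = 1 := by simp only [hgdef]; field_simp
      nlinarith [hss, hsq, hx0, h1x, hag]
    · rw [hτeq (L/2)]
      simp [hFdef, Real.arctan_one]
  · intro hC1 ha0 haL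
    -- Lipschitz-type bound
    have hdiff := hC1.differentiableOn one_ne_zero
    have hdc : ContinuousOn (derivWithin a (Set.Icc 0 L)) (Set.Icc 0 L) :=
      hC1.continuousOn_derivWithin (uniqueDiffOn_Icc hL) le_rfl
    obtain ⟨M, hM⟩ := isCompact_Icc.exists_bound_of_continuousOn hdc
    have hM0 : 0 ≤ M := le_trans (norm_nonneg _) (hM 0 ⟨le_rfl, hL.le⟩)
    set C := M + 1 with hCdef
    have hC0 : 0 < C := by linarith
    have hMVT : ∀ x ∈ Set.Icc 0 L, ∀ y ∈ Set.Icc 0 L, |a y - a x| ≤ C * |y - x| := by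
      intro x hx y hy
      have := (convex_Icc 0 L).norm_image_sub_le_of_norm_hasDerivWithin_le
        (fun u hu => (hdiff u hu).hasDerivWithinAt) hM hx hy
      have h2 : M * |y - x| ≤ C * |y - x| := by
        apply mul_le_mul_of_nonneg_right (by linarith) (abs_nonneg _)
      calc |a y - a x| ≤ M * |y - x| := by simpa [Real.norm_eq_abs] using this
        _ ≤ C * |y - x| := h2
    have hbound0 : ∀ u ∈ Set.Icc 0 L, a u ≤ C * u := by
      intro u hu
      have := hMVT 0 ⟨le_rfl, hL.le⟩ u hu
      rw [ha0, sub_zero, sub_zero, abs_of_nonneg hu.1] at this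
      exact le_trans (le_abs_self _) this
    have hboundL : ∀ u ∈ Set.Icc 0 L, a u ≤ C * (L - u) := by
      intro u hu
      have := hMVT L ⟨hL.le, le_rfl⟩ u hu
      rw [haL, sub_zero, abs_of_nonpos (by linarith [hu.2] : u - L ≤ 0)] at this
      have h2 : |a u| ≤ C * (L - u) := by simpa [neg_sub] using this
      exact le_trans (le_abs_self _) h2
    -- divergence near 0
    have hlo : ∀ t : ℝ, ∃ s₁ ∈ Set.Ioc 0 (L/4), F s₁ ≤ t := by
      intro t
      set ε := min (L/4) ((L/2) * Real.exp (C*t)) with hεdef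
      have hε0 : 0 < ε := lt_min (by linarith) (by positivity)
      have hε4 : ε ≤ L/4 := min_le_left _ _
      have hεL2 : ε < L/2 := by linarith
      refine ⟨ε, ⟨hε0, hε4⟩, ?_⟩
      have hsub : Set.Icc ε (L/2) ⊆ Set.Ioo 0 L := fun u hu => ⟨lt_of_lt_of_le hε0 hu.1, by
        rcases hu with ⟨_, h2⟩; linarith⟩
      have hcmp : ∀ u ∈ Set.Icc ε (L/2), (C*u)⁻¹ ≤ g u := by
        intro u hu
        have hu' := hsub hu
        have h1 : a u ≤ C * u := hbound0 u ⟨hu'.1.le, hu'.2.le⟩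
        have h2 : (0:ℝ) < a u := hapos u hu'
        rw [hgdef]
        simp only [one_div]
        exact inv_anti₀ h2 h1
      have hi1 : IntervalIntegrable (fun u => (C*u)⁻¹) MeasureTheory.volume ε (L/2) := by
        apply ContinuousOn.intervalIntegrable
        apply ContinuousOn.inv₀ (continuousOn_const.mul continuousOn_id)
        intro u hu
        rw [Set.uIcc_of_le hεL2.le] at hu
        have : 0 < u := lt_of_lt_of_le hε0 hu.1
        exact (mul_pos hC0 this).ne'
      have hi2 : IntervalIntegrable g MeasureTheory.volume ε (L/2) :=
        (hgcont.mono (fun u hu => hsub (by rwa [Set.uIcc_of_le hεL2.le] at hu))).intervalIntegrable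
      have hmono := intervalIntegral.integral_mono_on hεL2.le hi1 hi2 hcmp
      have hval : (∫ u in ε..(L/2), (C*u)⁻¹) = C⁻¹ * Real.log ((L/2)/ε) := by
        have : ∀ u, (C*u)⁻¹ = C⁻¹ * u⁻¹ := fun u => by rw [mul_inv]
        simp_rw [this]
        rw [intervalIntegral.integral_const_mul, integral_inv_of_pos hε0 (by linarith)]
      have hFε : F ε = -∫ u in ε..(L/2), g u := intervalIntegral.integral_symm ε (L/2)
      rw [hFε]
      have hlog : -(C*t) ≤ Real.log ((L/2)/ε) := by
        rw [Real.le_log_iff_exp_le (by positivity)]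
        rw [le_div_iff₀ hε0, mul_comm]
        calc ε * Real.exp (-(C*t)) ≤ (L/2) * Real.exp (C*t) * Real.exp (-(C*t)) :=
              mul_le_mul_of_nonneg_right (min_le_right _ _) (Real.exp_pos _).le
          _ = L/2 := by rw [mul_assoc, ← Real.exp_add]; simp
      have h3 : C⁻¹ * (-(C*t)) ≤ C⁻¹ * Real.log ((L/2)/ε) :=
        mul_le_mul_of_nonneg_left hlog (by positivity)
      have h4 : C⁻¹ * (-(C*t)) = -t := by field_simp
      rw [hval] at hmono
      linarith
    -- divergence near L
    have hhi : ∀ t : ℝ, ∃ s₂ ∈ Set.Ico (3*L/4) L, t ≤ F s₂ := by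
      intro t
      set δ := min (L/4) ((L/2) * Real.exp (-(C*t))) with hδdef
      have hδ0 : 0 < δ := lt_min (by linarith) (by positivity)
      have hδ4 : δ ≤ L/4 := min_le_left _ _
      set s₂ := L - δ with hs₂def
      have hs₂1 : 3*L/4 ≤ s₂ := by simp [hs₂def]; linarith
      have hs₂2 : s₂ < L := by simp [hs₂def]; linarith
      have hL2s₂ : L/2 ≤ s₂ := by linarith
      refine ⟨s₂, ⟨hs₂1, hs₂2⟩, ?_⟩
      have hsub : Set.Icc (L/2) s₂ ⊆ Set.Ioo 0 L := fun u hu =>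
        ⟨by rcases hu with ⟨h1, _⟩; linarith, lt_of_le_of_lt hu.2 hs₂2⟩
      have hcmp : ∀ u ∈ Set.Icc (L/2) s₂, (C*(L-u))⁻¹ ≤ g u := by
        intro u hu
        have hu' := hsub hu
        have h1 : a u ≤ C * (L - u) := hboundL u ⟨hu'.1.le, hu'.2.le⟩
        have h2 : (0:ℝ) < a u := hapos u hu'
        rw [hgdef]
        simp only [one_div]
        exact inv_anti₀ h2 h1
      have hi1 : IntervalIntegrable (fun u => (C*(L-u))⁻¹) MeasureTheory.volume (L/2) s₂ := by
        apply ContinuousOn.intervalIntegrable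
        apply ContinuousOn.inv₀ (continuousOn_const.mul (continuousOn_const.sub continuousOn_id))
        intro u hu
        rw [Set.uIcc_of_le hL2s₂] at hu
        have : 0 < L - u := by
          have := hu.2; simp only [hs₂def] at this ⊢; linarith
        exact (mul_pos hC0 this).ne'
      have hi2 : IntervalIntegrable g MeasureTheory.volume (L/2) s₂ :=
        (hgcont.mono (fun u hu => hsub (by rwa [Set.uIcc_of_le hL2s₂] at hu))).intervalIntegrable
      have hmono := intervalIntegral.integral_mono_on hL2s₂ hi1 hi2 hcmp
      have hval : (∫ u in (L/2)..s₂, (C*(L-u))⁻¹) = C⁻¹ * Real.log ((L/2)/δ) := by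
        have hprim : ∀ u ∈ Set.uIcc (L/2) s₂,
            HasDerivAt (fun v => -(C⁻¹ * Real.log (L - v))) ((C*(L-u))⁻¹) u := by
          intro u hu
          rw [Set.uIcc_of_le hL2s₂] at hu
          have hLu : 0 < L - u := by
            have := hu.2; simp only [hs₂def] at this; linarith
          have h1 : HasDerivAt (fun v => L - v) (-1) u := by
            simpa using (hasDerivAt_id u).const_sub L
          have h2 : HasDerivAt (fun v => Real.log (L - v)) ((L-u)⁻¹ * (-1)) u :=
            (Real.hasDerivAt_log hLu.ne').comp u h1
          have h3 := (h2.const_mul C⁻¹).neg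
          have e : (C*(L-u))⁻¹ = -(C⁻¹ * ((L - u)⁻¹ * -1)) := by
            rw [mul_inv]
            ring
          rw [e]; exact h3
        rw [intervalIntegral.integral_eq_sub_of_hasDerivAt hprim hi1]
        have hLs : L - s₂ = δ := by simp [hs₂def]
        rw [hLs]
        have : L - L/2 = L/2 := by ring
        rw [this, Real.log_div (by linarith : (L:ℝ)/2 ≠ 0) hδ0.ne']
        ring
      have hFs : F s₂ = ∫ u in (L/2)..s₂, g u := rfl
      rw [hFs]
      have hlog : C*t ≤ Real.log ((L/2)/δ) := by
        rw [← Real.log_exp (C*t)]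
        apply Real.log_le_log (Real.exp_pos _)
        rw [le_div_iff₀ hδ0]
        calc Real.exp (C*t) * δ ≤ Real.exp (C*t) * ((L/2) * Real.exp (-(C*t))) := by
              apply mul_le_mul_of_nonneg_left (min_le_right _ _) (Real.exp_pos _).le
          _ = L/2 := by
              rw [show Real.exp (C*t) * ((L/2) * Real.exp (-(C*t)))
                    = Real.exp (C*t) * Real.exp (-(C*t)) * (L/2) by ring, ← Real.exp_add]
              simp
      have h2 : C⁻¹ * (C*t) ≤ C⁻¹ * Real.log ((L/2)/δ) :=
        mul_le_mul_of_nonneg_left hlog (by positivity)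
      have hct : C⁻¹ * (C*t) = t := by field_simp
      rw [hval] at hmono
      linarith
    refine ⟨hτmono, hτcont, ?_, hτmono.injOn, ?_⟩
    · -- MapsTo
      intro s hs
      rw [hτeq s]
      refine ⟨?_, Real.arctan_lt_pi_div_two _⟩
      rw [← Real.arctan_zero]
      exact Real.arctan_strictMono (Real.exp_pos _)
    · -- SurjOn
      intro y hy
      have hy1 : 0 < y := hy.1
      have hy2 : y < Real.pi/2 := hy.2
      have hx : 0 < Real.tan y := Real.tan_pos_of_pos_of_lt_pi_div_two hy1 hy2
      set t := Real.log (Real.tan y) with htdef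
      obtain ⟨s₁, hs₁, hF₁⟩ := hlo t
      obtain ⟨s₂, hs₂, hF₂⟩ := hhi t
      have hs₁s₂ : s₁ ≤ s₂ := by
        have := hs₁.2; have := hs₂.1; linarith
      have hsub : Set.Icc s₁ s₂ ⊆ Set.Ioo 0 L := fun u hu =>
        ⟨lt_of_lt_of_le hs₁.1 hu.1, lt_of_le_of_lt hu.2 hs₂.2⟩
      have hFcont : ContinuousOn F (Set.Icc s₁ s₂) := fun u hu =>
        ((hFderiv u (hsub hu)).differentiableAt.continuousAt).continuousWithinAt
      have hIVT := intermediate_value_Icc hs₁s₂ hFcont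
      obtain ⟨s, hsmem, hFs⟩ := hIVT ⟨hF₁, hF₂⟩
      refine ⟨s, hsub hsmem, ?_⟩
      rw [hτeq s, hFs, htdef, Real.exp_log hx, Real.arctan_tan (by linarith [Real.pi_pos]) hy2]
end

section
/- Let n ≥ 1 be an integer, λ ∈ ℝ, let g be an n×n positive-definite Hermitian complex matrix, and let R : Fin n → Fin n → Fin n → Fin n → ℂ satisfy the Kähler curvature symmetries R(α,β,γ,δ) = R(γ,β,α,δ) = R(α,δ,γ,β) = R(γ,δ,α,β) and conj(R(α,β,γ,δ)) = R(β,α,δ,γ) for all indices. Suppose that for every Hermitian n×n complex matrix u, Re( −Σ_{α,β,γ,δ} R(α,β,γ,δ)·u(α,β)·u(γ,δ) ) ≥ 2λ · Re( Σ_{α,β,γ,δ} (g(α,β)g(γ,δ) + g(α,δ)g(γ,β))·u(α,β)·u(γ,δ) ). Then for all vectors v, w ∈ ℂⁿ, Re( −Σ_{α,β,γ,δ} R(α,β,γ,δ)·v(α)·conj(v(β))·w(γ)·conj(w(δ)) ) ≥ 2λ · Re( Σ_{α,β,γ,δ} (g(α,β)g(γ,δ) + g(α,δ)g(γ,β))·v(α)·conj(v(β))·w(γ)·conj(w(δ))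 ). -/
open scoped ComplexOrder

private theorem swap13' (n : ℕ) (f : Fin n → Fin n → Fin n → Fin n → ℂ) :
    ∑ α, ∑ β, ∑ γ, ∑ δ, f α β γ δ = ∑ α, ∑ β, ∑ γ, ∑ δ, f γ β α δ :=
  calc ∑ α, ∑ β, ∑ γ, ∑ δ, f α β γ δ
      = ∑ α, ∑ γ, ∑ β, ∑ δ, f α β γ δ :=
        Finset.sum_congr rfl fun _ _ => Finset.sum_comm
    _ = ∑ γ, ∑ α, ∑ β, ∑ δ, f α β γ δ := Finset.sum_comm
    _ = ∑ γ, ∑ β, ∑ α, ∑ δ, f α β γ δ :=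
        Finset.sum_congr rfl fun _ _ => Finset.sum_comm

private theorem swap24' (n : ℕ) (f : Fin n → Fin n → Fin n → Fin n → ℂ) :
    ∑ α, ∑ β, ∑ γ, ∑ δ, f α β γ δ = ∑ α, ∑ β, ∑ γ, ∑ δ, f α δ γ β :=
  Finset.sum_congr rfl fun α _ =>
  calc ∑ β, ∑ γ, ∑ δ, f α β γ δ
      = ∑ β, ∑ δ, ∑ γ, f α β γ δ :=
        Finset.sum_congr rfl fun _ _ => Finset.sum_comm
    _ = ∑ δ, ∑ β, ∑ γ, f α β γ δ := Finset.sum_comm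
    _ = ∑ δ, ∑ γ, ∑ β, f α β γ δ :=
        Finset.sum_congr rfl fun _ _ => Finset.sum_comm

private theorem key' (n : ℕ) (F : Fin n → Fin n → Fin n → Fin n → ℂ)
    (h1 : ∀ α β γ δ, F α β γ δ = F γ β α δ)
    (h2 : ∀ α β γ δ, F α β γ δ = F α δ γ β)
    (v w : Fin n → ℂ) :
    (∑ α, ∑ β, ∑ γ, ∑ δ, F α β γ δ *
        (Complex.I * (v α * (starRingEnd ℂ) (w β)) -
          Complex.I * (w α * (starRingEnd ℂ) (v β))) *
        (Complex.I * (v γ * (starRingEnd ℂ) (w δ)) -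
          Complex.I * (w γ * (starRingEnd ℂ) (v δ)))) +
      (∑ α, ∑ β, ∑ γ, ∑ δ, F α β γ δ *
        (v α * (starRingEnd ℂ) (w β) + w α * (starRingEnd ℂ) (v β)) *
        (v γ * (starRingEnd ℂ) (w δ) + w γ * (starRingEnd ℂ) (v δ))) =
    4 * ∑ α, ∑ β, ∑ γ, ∑ δ,
        F α β γ δ * v α * (starRingEnd ℂ) (v β) * w γ * (starRingEnd ℂ) (w δ) := by
  have step : (∑ α, ∑ β, ∑ γ, ∑ δ, F α β γ δ *
        (Complex.I * (v α * (starRingEnd ℂ) (w β)) -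
          Complex.I * (w α * (starRingEnd ℂ) (v β))) *
        (Complex.I * (v γ * (starRingEnd ℂ) (w δ)) -
          Complex.I * (w γ * (starRingEnd ℂ) (v δ)))) +
      (∑ α, ∑ β, ∑ γ, ∑ δ, F α β γ δ *
        (v α * (starRingEnd ℂ) (w β) + w α * (starRingEnd ℂ) (v β)) *
        (v γ * (starRingEnd ℂ) (w δ) + w γ * (starRingEnd ℂ) (v δ))) =
      2 * (∑ α, ∑ β, ∑ γ, ∑ δ,
          F α β γ δ * w α * (starRingEnd ℂ) (v β) * v γ * (starRingEnd ℂ) (w δ)) +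
      2 * (∑ α, ∑ β, ∑ γ, ∑ δ,
          F α β γ δ * v α * (starRingEnd ℂ) (w β) * w γ * (starRingEnd ℂ) (v δ)) := by
    simp only [← Finset.sum_add_distrib, Finset.mul_sum]
    refine Finset.sum_congr rfl fun α _ => Finset.sum_congr rfl fun β _ =>
      Finset.sum_congr rfl fun γ _ => Finset.sum_congr rfl fun δ _ => ?_
    linear_combination (F α β γ δ *
      (v α * (starRingEnd ℂ) (w β) - w α * (starRingEnd ℂ) (v β)) *
      (v γ * (starRingEnd ℂ) (w δ) - w γ * (starRingEnd ℂ) (v δ))) * Complex.I_sq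
  rw [step]
  have e1 : (∑ α, ∑ β, ∑ γ, ∑ δ,
      F α β γ δ * w α * (starRingEnd ℂ) (v β) * v γ * (starRingEnd ℂ) (w δ)) =
      ∑ α, ∑ β, ∑ γ, ∑ δ,
      F α β γ δ * v α * (starRingEnd ℂ) (v β) * w γ * (starRingEnd ℂ) (w δ) := by
    rw [swap13' n (fun α β γ δ =>
      F α β γ δ * w α * (starRingEnd ℂ) (v β) * v γ * (starRingEnd ℂ) (w δ))]
    refine Finset.sum_congr rfl fun α _ => Finset.sum_congr rfl fun β _ =>
      Finset.sum_congr rfl fun γ _ => Finset.sum_congr rfl fun δ _ => ?_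
    rw [← h1]; ring
  have e2 : (∑ α, ∑ β, ∑ γ, ∑ δ,
      F α β γ δ * v α * (starRingEnd ℂ) (w β) * w γ * (starRingEnd ℂ) (v δ)) =
      ∑ α, ∑ β, ∑ γ, ∑ δ,
      F α β γ δ * v α * (starRingEnd ℂ) (v β) * w γ * (starRingEnd ℂ) (w δ) := by
    rw [swap24' n (fun α β γ δ =>
      F α β γ δ * v α * (starRingEnd ℂ) (w β) * w γ * (starRingEnd ℂ) (v δ))]
    refine Finset.sum_congr rfl fun α _ => Finset.sum_congr rfl fun β _ =>
      Finset.sum_congr rfl fun γ _ => Finset.sum_congr rfl fun δ _ => ?_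
    rw [← h2]; ring
  rw [e1, e2]; ring

private theorem combine' (lam : ℝ) (A1 A2 B1 B2 a b : ℂ)
    (h1 : (-A1).re ≥ 2 * lam * B1.re) (h2 : (-A2).re ≥ 2 * lam * B2.re)
    (hA : A1 + A2 = 4 * a) (hB : B1 + B2 = 4 * b) :
    (-a).re ≥ 2 * lam * b.re := by
  have e1 : (-A1).re + (-A2).re = 4 * (-a).re := by
    have h : -A1 + -A2 = 4 * -a := by linear_combination -hA
    calc (-A1).re + (-A2).re = (-A1 + -A2).re := (Complex.add_re _ _).symm
      _ = (4 * -a).re := by rw [h]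
      _ = 4 * (-a).re := by simp [Complex.mul_re]
  have e2 : B1.re + B2.re = 4 * b.re := by
    rw [← Complex.add_re, hB]; simp [Complex.mul_re]
  have e3 : 2 * lam * B1.re + 2 * lam * B2.re = 4 * (2 * lam * b.re) := by
    linear_combination (2 * lam) * e2
  linarith [h1, h2, e1, e3]

/-- Lemma 2.20: if the curvature operator is `≥ 2λ` on real (1,1)-forms (tested against
Hermitian matrices `u`), then the holomorphic bisectional curvature is `≥ 2λ`. -/
theorem stmt_6 (n : ℕ) (hn : 1 ≤ n) (lam : ℝ)
    (g : Matrix (Fin n) (Fin n) ℂ) (hg : g.PosDef)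
    (R : Fin n → Fin n → Fin n → Fin n → ℂ)
    (hsym1 : ∀ α β γ δ, R α β γ δ = R γ β α δ)
    (hsym2 : ∀ α β γ δ, R α β γ δ = R α δ γ β)
    (hsym3 : ∀ α β γ δ, R α β γ δ = R γ δ α β)
    (hconj : ∀ α β γ δ, (starRingEnd ℂ) (R α β γ δ) = R β α δ γ)
    (hyp : ∀ u : Matrix (Fin n) (Fin n) ℂ, u.IsHermitian →
      (-(∑ α, ∑ β, ∑ γ, ∑ δ, R α β γ δ * u α β * u γ δ)).re ≥
        2 * lam *
          (∑ α, ∑ β, ∑ γ, ∑ δ,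
            (g α β * g γ δ + g α δ * g γ β) * u α β * u γ δ).re) :
    ∀ v w : Fin n → ℂ,
      (-(∑ α, ∑ β, ∑ γ, ∑ δ,
          R α β γ δ * v α * (starRingEnd ℂ) (v β) * w γ * (starRingEnd ℂ) (w δ))).re ≥
        2 * lam *
          (∑ α, ∑ β, ∑ γ, ∑ δ,
            (g α β * g γ δ + g α δ * g γ β) * v α * (starRingEnd ℂ) (v β) * w γ *
              (starRingEnd ℂ) (w δ)).re := by
  intro v w
  have hu1 : (Matrix.of fun α β =>
      Complex.I * (v α * (starRingEnd ℂ) (w β)) -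
        Complex.I * (w α * (starRingEnd ℂ) (v β)) :
      Matrix (Fin n) (Fin n) ℂ).IsHermitian := by
    ext i j
    simp [Matrix.conjTranspose_apply, Matrix.of_apply, map_sub, map_mul, Complex.conj_I]
    ring
  have hu2 : (Matrix.of fun α β =>
      v α * (starRingEnd ℂ) (w β) + w α * (starRingEnd ℂ) (v β) :
      Matrix (Fin n) (Fin n) ℂ).IsHermitian := by
    ext i j
    simp [Matrix.conjTranspose_apply, Matrix.of_apply, map_add, map_mul]
    ring
  have h₁ := hyp _ hu1
  have h₂ := hyp _ hu2
  simp only [Matrix.of_apply] at h₁ h₂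
  have hQ := key' n R hsym1 hsym2 v w
  have hG := key' n (fun α β γ δ => g α β * g γ δ + g α δ * g γ β)
    (fun α β γ δ => by ring) (fun α β γ δ => by ring) v w
  exact combine' lam _ _ _ _ _ _ h₁ h₂ hQ hG
end

section
/- Let n ≥ 3 be an integer, let λ ≥ 0 be real, and let a, a'', b, b', b'' be real numbers with a > 0 and b > 0. Then the following are equivalent. (i) For every nonzero Hermitian (n−1)×(n−1) complex matrix u (indices 1,…,n−1), 0 < (2(1 − λb² − (b')²)/b²) · ( (1/4)(Σ_{α=1}^{n−2} u(α,α))² + (1/4)Σ_{α,β=1}^{n−2} |u(α,β)|² ) + (−a''/(4a) − λ)·|u(n−1,n−1)|² + (−b''/b − λ)·Σ_{α=1}^{n−2} |u(α,n−1)|² + (−b''/b − λ)·u(n−1,n−1)·Σ_{α=1}^{n−2} u(α,α). (ii) All of the following hold: (1) 1 − λb² − (b')² > 0; (2) −a'' > 4λa; (3) −b'' > λb; (4) (2(n−1)(1 − λb² − (b')²)/((n−2)b²)) · (−a''/(4a) − λ) > (−b''/b − λ)². -/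
/-- Scalar core of Lemma 2.22: positivity of the quadratic expression given the
four inequalities. -/
lemma aux_pos_stmt7 (m A B C T t S q : ℝ) (hm : 1 ≤ m)
    (hA : 0 < A) (hB : 0 < B) (hC : 0 < C)
    (hdisc : C ^ 2 * m < A * (m + 1) * B)
    (hS : T ^ 2 ≤ m * S) (hq : 0 ≤ q)
    (hne : t ≠ 0 ∨ 0 < S ∨ 0 < q) :
    0 < A * (T ^ 2 / 4 + S / 4) + B * t ^ 2 + C * q + C * t * T := by
  by_cases hT : T = 0
  · subst hT
    rcases hne with h | h | h
    · nlinarith [mul_nonneg hC.le hq, (by positivity : (0:ℝ) < t ^ 2),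
        mul_nonneg hA.le (by nlinarith : (0:ℝ) ≤ S)]
    · nlinarith [mul_nonneg hC.le hq, sq_nonneg t]
    · nlinarith [sq_nonneg t, (by nlinarith : (0:ℝ) ≤ S)]
  · have hT2 : 0 < T ^ 2 := by positivity
    nlinarith [mul_nonneg (mul_nonneg (le_trans zero_le_one hm) hB.le) hC.le,
      mul_nonneg (le_trans zero_le_one hm) (sq_nonneg (2 * B * t + C * T)),
      mul_le_mul_of_nonneg_left hS (mul_pos hA hB).le,
      mul_pos (by nlinarith : (0:ℝ) < A * (m + 1) * B - C ^ 2 * m) hT2,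
      mul_nonneg (mul_nonneg (mul_nonneg (le_trans zero_le_one hm) hB.le) hC.le) hq]

/-- The distinguished last index `n-1` (in the paper's indexing `1,…,n-1`) of the
matrices appearing in Lemma 2.22. -/
lemma herm_aux_stmt7 {N : ℕ} (i0 j0 : Fin N) :
    (Matrix.of fun i j =>
      if i = i0 ∧ j = j0 then (1:ℂ) else if i = j0 ∧ j = i0 then 1 else 0).IsHermitian := by
  rw [Matrix.IsHermitian]
  ext i j
  rw [Matrix.conjTranspose_apply]
  simp only [Matrix.of_apply]
  split_ifs <;>
    first
      | exact star_one ℂ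
      | exact star_zero ℂ
      | (exfalso; tauto)

def lastIdx (n : ℕ) (hn : 3 ≤ n) : Fin (n - 1) := ⟨n - 2, by omega⟩

set_option maxHeartbeats 2000000 in
/-- Lemma 2.22: the curvature operator of the doubly warped product metric
`dr² + a²(r) η² + b²(r) gᵀ` is strictly greater than `2λ` on real (1,1)-forms
if and only if the four inequalities (1)–(4) on `a, a'', b, b', b''` hold. -/
theorem stmt_7 (n : ℕ) (hn : 3 ≤ n) (lam : ℝ) (hlam : 0 ≤ lam)
    (a app b bp bpp : ℝ) (ha : 0 < a) (hb : 0 < b) :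
    (∀ u : Matrix (Fin (n - 1)) (Fin (n - 1)) ℂ, u.IsHermitian → u ≠ 0 →
      0 < (2 * (1 - lam * b ^ 2 - bp ^ 2) / b ^ 2) *
            ((1 / 4) * (∑ α ∈ Finset.univ.filter (fun α : Fin (n - 1) => α ≠ lastIdx n hn),
                (u α α).re) ^ 2 +
              (1 / 4) * ∑ α ∈ Finset.univ.filter (fun α : Fin (n - 1) => α ≠ lastIdx n hn),
                ∑ β ∈ Finset.univ.filter (fun β : Fin (n - 1) => β ≠ lastIdx n hn),
                  ‖u α β‖ ^ 2) +
          (-app / (4 * a) - lam) * ‖u (lastIdx n hn) (lastIdx n hn)‖ ^ 2 +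
          (-bpp / b - lam) *
            ∑ α ∈ Finset.univ.filter (fun α : Fin (n - 1) => α ≠ lastIdx n hn),
              ‖u α (lastIdx n hn)‖ ^ 2 +
          (-bpp / b - lam) * (u (lastIdx n hn) (lastIdx n hn)).re *
            ∑ α ∈ Finset.univ.filter (fun α : Fin (n - 1) => α ≠ lastIdx n hn), (u α α).re)
      ↔
    (0 < 1 - lam * b ^ 2 - bp ^ 2 ∧
      -app > 4 * lam * a ∧
      -bpp > lam * b ∧
      2 * ((n : ℝ) - 1) * (1 - lam * b ^ 2 - bp ^ 2) / (((n : ℝ) - 2) * b ^ 2) *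
          (-app / (4 * a) - lam) > (-bpp / b - lam) ^ 2) := by
  set L := lastIdx n hn with hLdef
  set P := Finset.univ.filter (fun α : Fin (n - 1) => α ≠ L) with hPdef
  set A := 2 * (1 - lam * b ^ 2 - bp ^ 2) / b ^ 2 with hAdef
  set B := -app / (4 * a) - lam with hBdef
  set C := -bpp / b - lam with hCdef
  set m : ℝ := (n : ℝ) - 2 with hmdef
  have hn3 : (3:ℝ) ≤ (n:ℝ) := by exact_mod_cast hn
  have hm1 : (1:ℝ) ≤ m := by rw [hmdef]; linarith
  have hmpos : (0:ℝ) < m := lt_of_lt_of_le one_pos hm1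
  have hcard : P.card = n - 2 := by
    rw [hPdef, Finset.filter_ne', Finset.card_erase_of_mem (Finset.mem_univ _)]
    simp only [Finset.card_univ, Fintype.card_fin]
    omega
  have hcardR : (P.card : ℝ) = m := by
    rw [hcard, hmdef, Nat.cast_sub (by omega : 2 ≤ n)]; norm_num
  have hb2 : (0:ℝ) < b ^ 2 := by positivity
  have ha4 : (0:ℝ) < 4 * a := by linarith
  have hAb : A * b ^ 2 = 2 * (1 - lam * b ^ 2 - bp ^ 2) := by
    rw [hAdef]; field_simp
  set α0 : Fin (n - 1) := ⟨0, by omega⟩ with hα0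
  clear_value A B C m
  have h0L : α0 ≠ L := by
    rw [hα0, hLdef, lastIdx, Ne, Fin.mk.injEq]
    omega
  have h0P : α0 ∈ P := by rw [hPdef]; simp [h0L]
  constructor
  · -- forward direction
    intro h
    -- diagonal test matrices
    have hdiag : ∀ x y : ℝ, x ≠ 0 ∨ y ≠ 0 →
        0 < A * ((1/4) * (m * x) ^ 2 + (1/4) * (m * x ^ 2)) + B * y ^ 2 +
          C * 0 + C * y * (m * x) := by
      intro x y hxy
      set d : Fin (n - 1) → ℂ := fun α => if α = L then (y:ℂ) else (x:ℂ) with hd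
      set u : Matrix (Fin (n-1)) (Fin (n-1)) ℂ := Matrix.diagonal d with hu
      have herm : u.IsHermitian := by
        rw [hu, Matrix.isHermitian_diagonal_iff]
        intro i
        rw [isSelfAdjoint_iff, hd]
        by_cases hi : i = L <;> simp [hi, Complex.star_def, Complex.conj_ofReal]
      have hune : u ≠ 0 := by
        intro h0
        rcases hxy with hx | hy
        · have := congrFun (congrFun h0 α0) α0
          simp [hu, hd, Matrix.diagonal_apply_eq, h0L] at this
          exact hx (by exact_mod_cast this)
        · have := congrFun (congrFun h0 L) L
          simp [hu, hd, Matrix.diagonal_apply_eq] at this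
          exact hy (by exact_mod_cast this)
      have hT : ∑ α ∈ P, (u α α).re = (P.card : ℝ) * x := by
        rw [Finset.sum_congr rfl (fun α hα => ?_), Finset.sum_const, nsmul_eq_mul]
        have : α ≠ L := by rw [hPdef] at hα; exact (Finset.mem_filter.mp hα).2
        simp [hu, hd, Matrix.diagonal_apply_eq, this]
      have hS : ∑ α ∈ P, ∑ β ∈ P, ‖u α β‖ ^ 2 = (P.card : ℝ) * x ^ 2 := by
        rw [Finset.sum_congr rfl (fun α hα => ?_), Finset.sum_const, nsmul_eq_mul]
        have hαL : α ≠ L := by rw [hPdef] at hα; exact (Finset.mem_filter.mp hα).2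
        have : ∀ β ∈ P, ‖u α β‖ ^ 2 = if α = β then x ^ 2 else 0 := by
          intro β _
          by_cases hab : α = β
          · subst hab
            simp [hu, hd, Matrix.diagonal_apply_eq, hαL, Complex.norm_real, sq_abs]
          · simp [hu, Matrix.diagonal_apply_ne _ hab, hab]
        rw [Finset.sum_congr rfl this, Finset.sum_ite_eq P α (fun _ => x ^ 2), if_pos hα]
      have hq : ∑ α ∈ P, ‖u α L‖ ^ 2 = 0 := by
        refine Finset.sum_eq_zero fun α hα => ?_
        have : α ≠ L := by rw [hPdef] at hα; exact (Finset.mem_filter.mp hα).2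
        simp [hu, Matrix.diagonal_apply_ne _ this]
      have hLL : u L L = (y : ℂ) := by simp [hu, hd, Matrix.diagonal_apply_eq]
      have hre : (u L L).re = y := by rw [hLL]; simp
      have habs : ‖u L L‖ ^ 2 = y ^ 2 := by
        rw [hLL]; simp [Complex.norm_real, sq_abs]
      have := h u herm hune
      rw [hT, hS, hq, hre, habs, hcardR] at this
      linarith [this]
    -- (1)
    have hApos : 0 < A := by
      have h1 := hdiag 1 0 (Or.inl one_ne_zero)
      nlinarith [h1, hm1]
    have hX : 0 < 1 - lam * b ^ 2 - bp ^ 2 := by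
      nlinarith [mul_pos hApos hb2, hAb]
    -- (2)
    have hBpos : 0 < B := by
      have h2 := hdiag 0 1 (Or.inr one_ne_zero)
      norm_num at h2
      linarith [h2]
    have h2' : -app > 4 * lam * a := by
      have : lam < -app / (4 * a) := by rw [hBdef] at hBpos; linarith
      rw [lt_div_iff₀ ha4] at this
      linarith
    -- (3) : off-diagonal test matrix
    have hCpos : 0 < C := by
      set u : Matrix (Fin (n-1)) (Fin (n-1)) ℂ :=
        Matrix.of fun i j => if i = α0 ∧ j = L then 1 else if i = L ∧ j = α0 then 1 else 0
        with hu
      have herm : u.IsHermitian := herm_aux_stmt7 α0 L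
      have hune : u ≠ 0 := by
        intro h0
        have := congrFun (congrFun h0 α0) L
        simp [hu, Matrix.of_apply] at this
      have hT : ∑ α ∈ P, (u α α).re = 0 := by
        refine Finset.sum_eq_zero fun α hα => ?_
        have hα' : α ≠ L := by rw [hPdef] at hα; exact (Finset.mem_filter.mp hα).2
        have : u α α = 0 := by
          rw [hu]; simp only [Matrix.of_apply]
          rw [if_neg (by tauto), if_neg (by tauto)]
        simp [this]
      have hS : ∑ α ∈ P, ∑ β ∈ P, ‖u α β‖ ^ 2 = 0 := by
        refine Finset.sum_eq_zero fun α hα => Finset.sum_eq_zero fun β hβ => ?_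
        have hα' : α ≠ L := by rw [hPdef] at hα; exact (Finset.mem_filter.mp hα).2
        have hβ' : β ≠ L := by rw [hPdef] at hβ; exact (Finset.mem_filter.mp hβ).2
        have : u α β = 0 := by
          rw [hu]; simp only [Matrix.of_apply]
          rw [if_neg (by tauto), if_neg (by tauto)]
        simp [this]
      have hq : ∑ α ∈ P, ‖u α L‖ ^ 2 = 1 := by
        have : ∀ α ∈ P, ‖u α L‖ ^ 2 = if α = α0 then 1 else 0 := by
          intro α hα
          by_cases haa : α = α0
          · subst haa; rw [hu]; simp [Matrix.of_apply, h0L]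
          · have : u α L = 0 := by
              rw [hu]; simp only [Matrix.of_apply]
              rw [if_neg (by tauto), if_neg (by tauto)]
            simp [this, haa]
        rw [Finset.sum_congr rfl this, Finset.sum_ite_eq' P α0 (fun _ => (1:ℝ)), if_pos h0P]
      have hLL : u L L = 0 := by
        rw [hu]; simp only [Matrix.of_apply]
        rw [if_neg (by tauto), if_neg (by tauto)]
      have := h u herm hune
      rw [hT, hS, hq, hLL] at this
      simp at this
      linarith [this]
    have h3' : -bpp > lam * b := by
      have : lam < -bpp / b := by rw [hCdef] at hCpos; linarith
      rw [lt_div_iff₀ hb] at this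
      linarith
    -- (4)
    refine ⟨hX, h2', h3', ?_⟩
    have hBne : B ≠ 0 := ne_of_gt hBpos
    set y : ℝ := -(C * m) / (2 * B) with hy
    clear_value y
    have hy2 : 2 * B * y = -(C * m) := by rw [hy]; field_simp
    have key := hdiag 1 y (Or.inl one_ne_zero)
    have e3 : 4 * B * (A * (1/4 * (m * 1) ^ 2 + 1/4 * (m * 1 ^ 2)) + B * y ^ 2 +
        C * 0 + C * y * (m * 1)) =
        A * (m ^ 2 + m) * B + (2 * B * y) ^ 2 + 2 * (2 * B * y) * (C * m) := by ring
    have e4 : 0 < A * (m ^ 2 + m) * B + (2 * B * y) ^ 2 + 2 * (2 * B * y) * (C * m) := by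
      rw [← e3]
      exact mul_pos (by linarith) key
    rw [hy2] at e4
    have hmain : C ^ 2 * m < A * (m + 1) * B := by
      by_contra hc
      push_neg at hc
      have hc2 := mul_le_mul_of_nonneg_right hc hmpos.le
      linarith only [e4, hc2]
    rw [gt_iff_lt, div_mul_eq_mul_div, lt_div_iff₀ (by positivity : (0:ℝ) < m * b ^ 2)]
    have hn1 : (n:ℝ) - 1 = m + 1 := by rw [hmdef]; ring
    rw [hn1]
    calc C ^ 2 * (m * b ^ 2) = (C ^ 2 * m) * b ^ 2 := by ring
      _ < (A * (m + 1) * B) * b ^ 2 := by exact mul_lt_mul_of_pos_right hmain hb2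
      _ = 2 * (m + 1) * (1 - lam * b ^ 2 - bp ^ 2) * B := by
          linear_combination (m + 1) * B * hAb
  · -- reverse direction
    rintro ⟨h1, h2, h3, h4⟩
    have hApos : 0 < A := by rw [hAdef]; positivity
    have hBpos : 0 < B := by
      rw [hBdef, sub_pos, lt_div_iff₀ ha4]; linarith
    have hCpos : 0 < C := by
      rw [hCdef, sub_pos, lt_div_iff₀ hb]; linarith
    have hdisc : C ^ 2 * m < A * (m + 1) * B := by
      have hbne : b ≠ 0 := ne_of_gt hb
      have hmne : m ≠ 0 := ne_of_gt hmpos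
      have hn2ne : ((n:ℝ) - 2) ≠ 0 := by rw [← hmdef]; exact hmne
      have hfrac : 2 * ((n:ℝ) - 1) * (1 - lam * b ^ 2 - bp ^ 2) / (m * b ^ 2)
          = A * (m + 1) / m := by
        rw [hAdef, hmdef]
        field_simp
        ring
      rw [hfrac, gt_iff_lt, div_mul_eq_mul_div, lt_div_iff₀ hmpos] at h4
      linarith only [h4]
    intro u herm hune
    set T : ℝ := ∑ α ∈ P, (u α α).re with hT
    set S : ℝ := ∑ α ∈ P, ∑ β ∈ P, ‖u α β‖ ^ 2 with hSd
    set q : ℝ := ∑ α ∈ P, ‖u α L‖ ^ 2 with hqd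
    set t : ℝ := (u L L).re with htd
    have habs_sq : ∀ i j : Fin (n - 1), (u i j).re ^ 2 ≤ ‖u i j‖ ^ 2 := by
      intro i j
      rw [Complex.sq_norm, Complex.normSq_apply]
      linarith only [sq_nonneg (u i j).im]
    have hdiagreal : ∀ i : Fin (n - 1), (u i i).im = 0 := by
      intro i
      have := congrFun (congrFun herm i) i
      rw [Matrix.conjTranspose_apply] at this
      exact Complex.conj_eq_iff_im.mp this
    have hqnn : 0 ≤ q := Finset.sum_nonneg fun α _ => by positivity
    have hSnn : ∀ α ∈ P, (0:ℝ) ≤ ∑ β ∈ P, ‖u α β‖ ^ 2 :=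
      fun α _ => Finset.sum_nonneg fun β _ => by positivity
    have hSbound : T ^ 2 ≤ m * S := by
      have step1 : T ^ 2 ≤ (P.card : ℝ) * ∑ α ∈ P, (u α α).re ^ 2 := by
        exact_mod_cast sq_sum_le_card_mul_sum_sq (s := P) (f := fun α => (u α α).re)
      have step2 : ∑ α ∈ P, (u α α).re ^ 2 ≤ S := by
        refine Finset.sum_le_sum fun α hα => ?_
        calc (u α α).re ^ 2 ≤ ‖u α α‖ ^ 2 := habs_sq α α
          _ ≤ ∑ β ∈ P, ‖u α β‖ ^ 2 :=
            Finset.single_le_sum (f := fun β => ‖u α β‖ ^ 2)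
              (fun β _ => by positivity) hα
      calc T ^ 2 ≤ (P.card : ℝ) * ∑ α ∈ P, (u α α).re ^ 2 := step1
        _ ≤ (P.card : ℝ) * S := by
            exact mul_le_mul_of_nonneg_left step2 (Nat.cast_nonneg _)
        _ = m * S := by rw [hcardR]
    have hcases : t ≠ 0 ∨ 0 < S ∨ 0 < q := by
      by_contra hcon
      push_neg at hcon
      obtain ⟨ht0, hS0, hq0⟩ := hcon
      have hSzero : S = 0 := le_antisymm hS0 (Finset.sum_nonneg hSnn)
      have hqzero : q = 0 := le_antisymm hq0 hqnn
      have hSent : ∀ α ∈ P, ∀ β ∈ P, ‖u α β‖ ^ 2 = 0 := by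
        intro α hα β hβ
        have h1 := (Finset.sum_eq_zero_iff_of_nonneg hSnn).mp hSzero α hα
        exact (Finset.sum_eq_zero_iff_of_nonneg
          (fun β _ => by positivity)).mp h1 β hβ
      have hqent : ∀ α ∈ P, ‖u α L‖ ^ 2 = 0 := by
        intro α hα
        exact (Finset.sum_eq_zero_iff_of_nonneg
          (fun α _ => by positivity)).mp hqzero α hα
      have habs0 : ∀ z : ℂ, ‖z‖ ^ 2 = 0 → z = 0 := by
        intro z hz
        have : ‖z‖ = 0 := by nlinarith [norm_nonneg z]
        exact norm_eq_zero.mp this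
      apply hune
      ext i j
      rw [Matrix.zero_apply]
      by_cases hiL : i = L <;> by_cases hjL : j = L
      · subst hiL; subst hjL
        exact Complex.ext (by simpa using ht0) (by simpa using hdiagreal L)
      · subst hiL
        have hjP : j ∈ P := by rw [hPdef]; simp [hjL]
        have hj0 : u j L = 0 := habs0 _ (hqent j hjP)
        have := congrFun (congrFun herm L) j
        rw [Matrix.conjTranspose_apply] at this
        rw [← this, hj0, star_zero]
      · subst hjL
        have hiP : i ∈ P := by rw [hPdef]; simp [hiL]
        exact habs0 _ (hqent i hiP)
      · have hiP : i ∈ P := by rw [hPdef]; simp [hiL]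
        have hjP : j ∈ P := by rw [hPdef]; simp [hjL]
        exact habs0 _ (hSent i hiP j hjP)
    have habsLL : ‖u L L‖ ^ 2 = t ^ 2 := by
      rw [Complex.sq_norm, Complex.normSq_apply, hdiagreal L, htd]
      ring
    rw [habsLL]
    have key := aux_pos_stmt7 m A B C T t S q hm1 hApos hBpos hCpos hdisc hSbound hqnn hcases
    linarith [key]
end

section
/- Let E be a finite-dimensional real inner product space, let V₁ be a subspace with orthogonal complement V₂, and let M₁ be a subspace with orthogonal complement M₂. Assume V₁ ≠ {0}, V₂ ≠ {0}, dim M₁ ≥ 2 and dim M₂ ≥ 2. Suppose that for every v ∈ M₁ and every w ∈ M₂, writing v = v₁ + v₂ and w = w₁ + w₂ with v₁, w₁ ∈ V₁ and v₂, w₂ ∈ V₂ (orthogonal projections), the pair (v₁, w₁) is linearly dependent and the pair (v₂, w₂) is linearly dependent. Then either M₁ = V₁ and M₂ = V₂, or M₁ = V₂ and M₂ = V₁. -/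
open Module Submodule RealInnerProductSpace

private lemma pair_symm {E : Type*} [AddCommGroup E] [Module ℝ E] {x y : E}
    (h : ¬ LinearIndependent ℝ ![x, y]) : ¬ LinearIndependent ℝ ![y, x] := by
  rw [LinearIndependent.pair_iff] at h ⊢
  intro H
  exact h fun s t hst => (H t s (by rwa [add_comm])).symm


private lemma mem_span_of_dep {E : Type*} [AddCommGroup E] [Module ℝ E] {x y : E}
    (hx : x ≠ 0) (h : ∃ s t : ℝ, s • x + t • y = 0 ∧ (s = 0 → t ≠ 0)) :
    y ∈ Submodule.span ℝ {x} := by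
  obtain ⟨s, t, hst, hne⟩ := h
  by_cases ht : t = 0
  · subst ht
    have hs : s ≠ 0 := fun h0 => (hne h0) rfl
    rw [zero_smul, add_zero] at hst
    exact absurd ((smul_eq_zero.1 hst).resolve_left hs) hx
  · rw [Submodule.mem_span_singleton]
    refine ⟨-(t⁻¹ * s), ?_⟩
    have h1 : t • y = -(s • x) := by rw [eq_neg_iff_add_eq_zero, add_comm]; exact hst
    calc (-(t⁻¹ * s)) • x = t⁻¹ • (t • y) := by
          rw [h1, ← neg_smul, smul_smul]; congr 1; ring
      _ = y := inv_smul_smul₀ ht y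

private lemma aux_split {E : Type*} [NormedAddCommGroup E] [InnerProductSpace ℝ E]
    [FiniteDimensional ℝ E]
    (V₁ M N : Submodule ℝ E)
    (hN : 2 ≤ Module.finrank ℝ N)
    (horth : ∀ v ∈ M, ∀ w ∈ N, ⟪v, w⟫ = 0)
    (hdep : ∀ v ∈ M, ∀ w ∈ N,
      ¬ LinearIndependent ℝ
          ![((orthogonalProjection V₁ v : V₁) : E), ((orthogonalProjection V₁ w : V₁) : E)] ∧
      ¬ LinearIndependent ℝ
          ![v - ((orthogonalProjection V₁ v : V₁) : E),
            w - ((orthogonalProjection V₁ w : V₁) : E)]) :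
    M ≤ V₁ ∨ M ≤ V₁ᗮ := by
  classical
  by_cases hA : ∃ v ∈ M, ((orthogonalProjection V₁ v : V₁) : E) ≠ 0 ∧
      v - ((orthogonalProjection V₁ v : V₁) : E) ≠ 0
  · exfalso
    obtain ⟨v, hvM, hPv, hQv⟩ := hA
    set p : E := ((orthogonalProjection V₁ v : V₁) : E) with hp
    have hv0 : v ≠ 0 := by
      rintro rfl
      exact hPv (by simp [hp])
    set S : Submodule ℝ E := span ℝ {p, v - p} with hS
    have hmem1 : p ∈ S := subset_span (by simp)
    have hmem2 : v - p ∈ S := subset_span (by simp)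
    have hvS : v ∈ S := by
      have := S.add_mem hmem1 hmem2
      simpa using this
    have hNle : N ≤ S ⊓ (ℝ ∙ v)ᗮ := by
      intro w hw
      obtain ⟨h1, h2⟩ := hdep v hvM w hw
      rw [LinearIndependent.pair_iff] at h1 h2
      push_neg at h1 h2
      refine Submodule.mem_inf.2 ⟨?_, ?_⟩
      · have hw1 : ((orthogonalProjection V₁ w : V₁) : E) ∈ S :=
          span_mono (by simp : ({p} : Set E) ⊆ {p, v - p}) (mem_span_of_dep hPv h1)
        have hw2 : w - ((orthogonalProjection V₁ w : V₁) : E) ∈ S :=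
          span_mono (by simp : ({v - p} : Set E) ⊆ {p, v - p}) (mem_span_of_dep hQv h2)
        have := S.add_mem hw1 hw2
        simpa using this
      · exact Submodule.mem_orthogonal_singleton_iff_inner_right.2 (horth v hvM w hw)
    have hlt : S ⊓ (ℝ ∙ v)ᗮ < S := by
      refine SetLike.lt_iff_le_and_exists.2 ⟨inf_le_left, v, hvS, ?_⟩
      intro hv
      have h := (Submodule.mem_inf.1 hv).2
      rw [Submodule.mem_orthogonal_singleton_iff_inner_right] at h
      exact (inner_self_ne_zero.2 hv0) h
    have hS2 : Module.finrank ℝ S ≤ 2 := by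
      refine (finrank_span_le_card _).trans ?_
      rw [Set.toFinset_insert, Set.toFinset_singleton]
      exact (Finset.card_insert_le _ _).trans (by simp)
    have hlt' := Submodule.finrank_lt_finrank_of_lt hlt
    have hle' := Submodule.finrank_mono hNle
    omega
  · push_neg at hA
    by_contra hcon
    push_neg at hcon
    obtain ⟨h1, h2⟩ := hcon
    obtain ⟨x, hxM, hxV⟩ := SetLike.not_le_iff_exists.1 h1
    obtain ⟨y, hyM, hyV⟩ := SetLike.not_le_iff_exists.1 h2
    have key : ∀ z ∈ M, z ∈ V₁ ∨ z ∈ V₁ᗮ := by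
      intro z hz
      by_cases hz1 : ((orthogonalProjection V₁ z : V₁) : E) = 0
      · right
        have h : z - ((orthogonalProjection V₁ z : V₁) : E) ∈ V₁ᗮ :=
          sub_starProjection_mem_orthogonal (K := V₁) z
        rwa [hz1, sub_zero] at h
      · left
        have h := hA z hz hz1
        have hzp : z = ((orthogonalProjection V₁ z : V₁) : E) := by
          rwa [sub_eq_zero] at h
        rw [hzp]
        exact (orthogonalProjection V₁ z).2
    have hx2 : x ∈ V₁ᗮ := (key x hxM).resolve_left hxV
    have hy1 : y ∈ V₁ := (key y hyM).resolve_right hyV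
    rcases key (x + y) (M.add_mem hxM hyM) with h | h
    · exact hxV (by simpa using V₁.sub_mem h hy1)
    · exact hyV (by simpa using V₁ᗮ.sub_mem h hx2)

/-- The linear-algebraic splitting argument from the proof of Theorem A (Section 5):
if every `v ∈ M₁`, `w ∈ M₁ᗮ` have linearly dependent `V₁`-components and linearly
dependent `V₁ᗮ`-components, then the two orthogonal decompositions coincide. -/
theorem stmt_9 {E : Type*} [NormedAddCommGroup E] [InnerProductSpace ℝ E]
    [FiniteDimensional ℝ E]
    (V₁ M₁ : Submodule ℝ E)
    (hV₁ : V₁ ≠ ⊥) (hV₂ : V₁ᗮ ≠ ⊥)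
    (hM₁ : 2 ≤ Module.finrank ℝ M₁) (hM₂ : 2 ≤ Module.finrank ℝ M₁ᗮ)
    (hdep : ∀ v ∈ M₁, ∀ w ∈ M₁ᗮ,
      ¬ LinearIndependent ℝ
          ![((V₁.orthogonalProjectionOnto v : V₁) : E), ((V₁.orthogonalProjectionOnto w : V₁) : E)] ∧
      ¬ LinearIndependent ℝ
          ![v - ((V₁.orthogonalProjectionOnto v : V₁) : E),
            w - ((V₁.orthogonalProjectionOnto w : V₁) : E)]) :
    (M₁ = V₁ ∧ M₁ᗮ = V₁ᗮ) ∨ (M₁ = V₁ᗮ ∧ M₁ᗮ = V₁) := by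
  have h1 : M₁ ≤ V₁ ∨ M₁ ≤ V₁ᗮ :=
    aux_split V₁ M₁ M₁ᗮ hM₂
      (fun v hv w hw => (Submodule.mem_orthogonal M₁ w).1 hw v hv) hdep
  have h2 : M₁ᗮ ≤ V₁ ∨ M₁ᗮ ≤ V₁ᗮ := by
    refine aux_split V₁ M₁ᗮ M₁ hM₁ ?_ ?_
    · intro v hv w hw
      rw [real_inner_comm]
      exact (Submodule.mem_orthogonal M₁ v).1 hv w hw
    · intro v hv w hw
      exact ⟨pair_symm (hdep w hw v hv).1, pair_symm (hdep w hw v hv).2⟩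
  have hVoo : V₁ᗮᗮ = V₁ := Submodule.orthogonal_orthogonal V₁
  have hMoo : M₁ᗮᗮ = M₁ := Submodule.orthogonal_orthogonal M₁
  rcases h1 with h1 | h1 <;> rcases h2 with h2 | h2
  · exfalso
    have : V₁ᗮ ≤ V₁ := le_trans (Submodule.orthogonal_le h1) h2
    exact hV₂ ((Submodule.orthogonal_disjoint V₁).symm.eq_bot_of_le this)
  · left
    have hM2 : M₁ᗮ = V₁ᗮ := le_antisymm h2 (Submodule.orthogonal_le h1)
    refine ⟨?_, hM2⟩
    rw [← hMoo, hM2, hVoo]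
  · right
    have hM2 : M₁ᗮ = V₁ := le_antisymm h2 (by rw [← hVoo]; exact Submodule.orthogonal_le h1)
    refine ⟨?_, hM2⟩
    rw [← hMoo, hM2]
  · exfalso
    have : V₁ ≤ V₁ᗮ := hVoo.symm.trans_le (le_trans (Submodule.orthogonal_le h1) h2)
    exact hV₁ ((Submodule.orthogonal_disjoint V₁).eq_bot_of_le this)
end

section
/- Let L > 0 and let a : ℝ → ℝ be infinitely differentiable with a(s) > 0 for all s ∈ (0,L), a(0) = a(L) = 0, a'(0) = 1, a'(L) = −1, and with all even-order derivatives of a vanishing at both 0 and L (i.e., a^{(2k)}(0) = a^{(2k)}(L) = 0 for every k ≥ 0). Define b(s) = √(2·∫₀ˢ a(τ) dτ) for s ∈ [0,L]. Then b extends to a function that is infinitely differentiable on an open interval containing [0,L] and satisfies: b(0) = 0, b'(0) = 1, all even-order derivatives of b vanish at 0 (b^{(2k)}(0) = 0 for every k ≥ 0), all odd-order derivatives of b vanish at L (b^{(2k+1)}(L) = 0 for every k ≥ 0), and b(L) > 0. -/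
open Set Filter Topology MeasureTheory
open scoped ContDiff

lemma contDiffOn_iteratedDeriv' {V : Set ℝ} (hV : IsOpen V) (i : ℕ) : ∀ {f : ℝ → ℝ},
    ContDiffOn ℝ ∞ f V → ContDiffOn ℝ ∞ (iteratedDeriv i f) V := by
  induction i with
  | zero => intro f hf; simpa [iteratedDeriv_zero] using hf
  | succ i ih =>
    intro f hf
    rw [iteratedDeriv_succ']
    exact ih ((contDiffOn_infty_iff_deriv_of_isOpen hV).1 hf).2

lemma differentiableAt_iteratedDeriv' {V : Set ℝ} (hV : IsOpen V) {f : ℝ → ℝ}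
    (hf : ContDiffOn ℝ ∞ f V) {x : ℝ} (hx : x ∈ V) (i : ℕ) :
    DifferentiableAt ℝ (iteratedDeriv i f) x :=
  (((contDiffOn_infty_iff_deriv_of_isOpen hV).1 (contDiffOn_iteratedDeriv' hV i hf)).1 x
    hx).differentiableAt (hV.mem_nhds hx)

lemma hasDerivAt_iteratedDeriv' {V : Set ℝ} (hV : IsOpen V) {f : ℝ → ℝ}
    (hf : ContDiffOn ℝ ∞ f V) {x : ℝ} (hx : x ∈ V) (i : ℕ) :
    HasDerivAt (iteratedDeriv i f) (iteratedDeriv (i + 1) f x) x := by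
  have h := (differentiableAt_iteratedDeriv' hV hf hx i).hasDerivAt
  rwa [show deriv (iteratedDeriv i f) x = iteratedDeriv (i+1) f x by rw [iteratedDeriv_succ]] at h

lemma binom_sum (n : ℕ) (T : ℕ → ℝ) :
    ∑ i ∈ Finset.range (n + 1), (n.choose i : ℝ) * (T (i + 1) + T i)
      = ∑ i ∈ Finset.range (n + 2), ((n + 1).choose i : ℝ) * T i := by
  have e2 : ∀ i, (((n + 1).choose (i + 1) : ℕ) : ℝ) = (n.choose i : ℝ) + (n.choose (i + 1) : ℝ) := by
    intro i; exact_mod_cast Nat.choose_succ_succ n i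
  rw [Finset.sum_range_succ' (fun i => ((n + 1).choose i : ℝ) * T i) (n + 1)]
  simp_rw [e2, add_mul, Finset.sum_add_distrib, mul_add, Finset.sum_add_distrib]
  have e3 : ∑ i ∈ Finset.range (n + 1), (n.choose i : ℝ) * T i
      = ∑ i ∈ Finset.range (n + 1), (n.choose (i + 1) : ℝ) * T (i + 1)
        + ((n + 1).choose 0 : ℝ) * T 0 := by
    rw [Finset.sum_range_succ (fun i => (n.choose (i + 1) : ℝ) * T (i + 1)) n]
    rw [Finset.sum_range_succ' (fun i => (n.choose i : ℝ) * T i) n]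
    simp [Nat.choose_succ_self]
  rw [e3]; ring

lemma leibniz' {U : Set ℝ} (hU : IsOpen U) {f g : ℝ → ℝ}
    (hf : ContDiffOn ℝ ∞ f U) (hg : ContDiffOn ℝ ∞ g U) (n : ℕ) :
    ∀ {x : ℝ}, x ∈ U → iteratedDeriv n (fun s => f s * g s) x
      = ∑ i ∈ Finset.range (n + 1),
          (n.choose i : ℝ) * (iteratedDeriv i f x * iteratedDeriv (n - i) g x) := by
  induction n with
  | zero => intro x hx; simp
  | succ n ih =>
    intro x hx
    have hev : iteratedDeriv n (fun s => f s * g s)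
        =ᶠ[𝓝 x] fun y => ∑ i ∈ Finset.range (n + 1),
          (n.choose i : ℝ) * (iteratedDeriv i f y * iteratedDeriv (n - i) g y) := by
      filter_upwards [hU.mem_nhds hx] with y hy using ih hy
    rw [iteratedDeriv_succ, hev.deriv_eq]
    have hterm : ∀ i ∈ Finset.range (n + 1),
        HasDerivAt (fun y => (n.choose i : ℝ) * (iteratedDeriv i f y * iteratedDeriv (n - i) g y))
          ((n.choose i : ℝ) * (iteratedDeriv (i + 1) f x * iteratedDeriv (n - i) g x
            + iteratedDeriv i f x * iteratedDeriv (n - i + 1) g x)) x := by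
      intro i _
      exact ((hasDerivAt_iteratedDeriv' hU hf hx i).mul
        (hasDerivAt_iteratedDeriv' hU hg hx (n - i))).const_mul _
    rw [(HasDerivAt.fun_sum hterm).deriv]
    have key := binom_sum n (fun i => iteratedDeriv i f x * iteratedDeriv (n + 1 - i) g x)
    rw [← key]
    refine Finset.sum_congr rfl fun i hi => ?_
    have hi' : i ≤ n := Nat.lt_succ_iff.mp (Finset.mem_range.mp hi)
    have h1 : n + 1 - (i + 1) = n - i := by omega
    have h2 : n + 1 - i = n - i + 1 := by omega
    rw [h1, h2]

lemma odd_of_sq {U : Set ℝ} (hU : IsOpen U) {q : ℝ → ℝ} (hq : ContDiffOn ℝ ∞ q U)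
    {x : ℝ} (hx : x ∈ U) (hqx : q x ≠ 0)
    (hsq : ∀ m : ℕ, Odd m → iteratedDeriv m (fun s => q s * q s) x = 0) :
    ∀ m : ℕ, Odd m → iteratedDeriv m q x = 0 := by
  intro m
  induction m using Nat.strong_induction_on with
  | _ m ih =>
    intro hm
    have hm0 : m ≠ 0 := by rintro rfl; exact (Nat.not_odd_iff_even.2 Even.zero) hm
    have hL := (leibniz' hU hq hq m hx).symm.trans (hsq m hm)
    have hsub : ({0, m} : Finset ℕ) ⊆ Finset.range (m + 1) := by
      intro i hi
      simp only [Finset.mem_insert, Finset.mem_singleton] at hi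
      rcases hi with rfl | rfl <;> simp [Finset.mem_range] <;> omega
    have hz : ∀ i ∈ Finset.range (m + 1), i ∉ ({0, m} : Finset ℕ) →
        (m.choose i : ℝ) * (iteratedDeriv i q x * iteratedDeriv (m - i) q x) = 0 := by
      intro i hi hnot
      simp only [Finset.mem_insert, Finset.mem_singleton, not_or] at hnot
      have hir : i < m + 1 := Finset.mem_range.mp hi
      by_cases hodd : Odd i
      · rw [ih i (by omega) hodd]; ring
      · have hie : Even i := Nat.not_odd_iff_even.mp hodd
        have hmi : Odd (m - i) := Nat.Odd.sub_even (by omega) hm hie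
        rw [ih (m - i) (by omega) hmi]; ring
    have hps := (Finset.sum_subset hsub hz).trans hL
    rw [Finset.sum_pair (show (0 : ℕ) ≠ m by omega)] at hps
    simp only [Nat.choose_zero_right, Nat.choose_self, Nat.cast_one, one_mul,
      iteratedDeriv_zero, Nat.sub_zero, Nat.sub_self] at hps
    have : q x * iteratedDeriv m q x = 0 := by linarith
    exact (mul_eq_zero.mp this).resolve_left hqx

lemma hasDerivAt_param (φ : ℝ × ℝ → ℝ) (hφ : ContDiff ℝ ∞ φ) (s₀ : ℝ) :
    HasDerivAt (fun s => ∫ t in (0:ℝ)..1, φ (t, s))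
      (∫ t in (0:ℝ)..1, fderiv ℝ φ (t, s₀) (0, 1)) s₀ := by
  have hcont : Continuous φ := hφ.continuous
  have hDcont : Continuous fun p : ℝ × ℝ => fderiv ℝ φ p (0, 1) :=
    (ContinuousLinearMap.apply ℝ ℝ ((0 : ℝ), (1 : ℝ))).continuous.comp
      (hφ.fderiv_right (show ∞ + 1 ≤ ∞ from le_of_eq rfl)).continuous
  obtain ⟨C, hC⟩ := ((isCompact_Icc (a := (0:ℝ)) (b := 1)).prod
      (isCompact_Icc (a := s₀ - 1) (b := s₀ + 1))).exists_bound_of_continuousOn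
      hDcont.continuousOn
  have hdiff : ∀ (t x : ℝ), HasDerivAt (fun y => φ (t, y)) (fderiv ℝ φ (t, x) (0, 1)) x := by
    intro t x
    have h1 : HasFDerivAt φ (fderiv ℝ φ (t, x)) (t, x) :=
      ((hφ.differentiable (by simp)) (t, x)).hasFDerivAt
    have h2 : HasDerivAt (fun y : ℝ => ((t, y) : ℝ × ℝ)) ((0 : ℝ), (1 : ℝ)) x :=
      (hasDerivAt_const x t).prodMk (hasDerivAt_id x)
    exact h1.comp_hasDerivAt x h2
  have key := intervalIntegral.hasDerivAt_integral_of_dominated_loc_of_deriv_le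
    (F := fun x t => φ (t, x)) (F' := fun x t => fderiv ℝ φ (t, x) (0, 1)) (x₀ := s₀)
    (a := 0) (b := 1) (μ := volume) (bound := fun _ => C) (Metric.ball_mem_nhds s₀ one_pos)
    (Filter.Eventually.of_forall fun x =>
      (hcont.comp (continuous_id.prodMk continuous_const)).aestronglyMeasurable)
    ((hcont.comp (continuous_id.prodMk continuous_const)).intervalIntegrable 0 1)
    ((hDcont.comp (continuous_id.prodMk continuous_const)).aestronglyMeasurable)
    (Filter.Eventually.of_forall fun t ht => fun x hx => ?_)
    (intervalIntegrable_const)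
    (Filter.Eventually.of_forall fun t _ => fun x _ => hdiff t x)
  · exact key.2
  · refine hC (t, x) ⟨?_, ?_⟩
    · exact Ioc_subset_Icc_self (by simpa [Set.uIoc_of_le (zero_le_one)] using ht)
    · have := Metric.mem_ball.mp hx
      rw [Real.dist_eq] at this
      constructor <;> simp only [] <;> cases abs_sub_lt_iff.mp this with
      | intro h1 h2 => first | linarith | linarith

lemma contDiff_param (φ : ℝ × ℝ → ℝ) (hφ : ContDiff ℝ ∞ φ) :
    ContDiff ℝ ∞ (fun s => ∫ t in (0:ℝ)..1, φ (t, s)) := by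
  suffices H : ∀ (n : ℕ) (ψ : ℝ × ℝ → ℝ), ContDiff ℝ ∞ ψ →
      ContDiff ℝ (n : WithTop ℕ∞) (fun s => ∫ t in (0:ℝ)..1, ψ (t, s)) by
    rw [show ((⊤:ℕ∞) : WithTop ℕ∞) = (∞ : WithTop ℕ∞) from rfl, contDiff_infty]
    exact fun n => H n φ hφ
  intro n
  induction n with
  | zero =>
    intro ψ hψ
    rw [show ((0:ℕ) : WithTop ℕ∞) = 0 from rfl, contDiff_zero]
    exact Differentiable.continuous fun s => (hasDerivAt_param ψ hψ s).differentiableAt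
  | succ n ih =>
    intro ψ hψ
    have hD : ContDiff ℝ ∞ (fun p : ℝ × ℝ => fderiv ℝ ψ p (0, 1)) :=
      ((ContinuousLinearMap.apply ℝ ℝ ((0 : ℝ), (1 : ℝ))).contDiff).comp
        (hψ.fderiv_right (show ∞ + 1 ≤ ∞ from le_of_eq rfl))
    rw [show (((n+1:ℕ)) : WithTop ℕ∞) = (n : WithTop ℕ∞) + 1 by push_cast ; rfl]
    rw [contDiff_succ_iff_deriv]
    refine ⟨fun s => (hasDerivAt_param ψ hψ s).differentiableAt, ?_, ?_⟩
    · exact fun h => absurd h (WithTop.natCast_ne_top n)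
    · have hder : deriv (fun s => ∫ t in (0:ℝ)..1, ψ (t, s))
          = fun s => ∫ t in (0:ℝ)..1, (fun p : ℝ × ℝ => fderiv ℝ ψ p (0, 1)) (t, s) :=
        funext fun s => (hasDerivAt_param ψ hψ s).deriv
      rw [hder]
      exact ih _ hD

lemma hadamard {f : ℝ → ℝ} (hf : ContDiff ℝ ∞ f) (h0 : f 0 = 0) :
    ∃ F : ℝ → ℝ, ContDiff ℝ ∞ F ∧ ∀ s, f s = s * F s := by
  have hf' : ContDiff ℝ ∞ (deriv f) := (contDiff_infty_iff_deriv.1 hf).2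
  have hφ : ContDiff ℝ ∞ (fun p : ℝ × ℝ => deriv f (p.1 * p.2)) :=
    hf'.comp (contDiff_fst.mul contDiff_snd)
  refine ⟨fun s => ∫ t in (0:ℝ)..1, deriv f (t * s), contDiff_param _ hφ, fun s => ?_⟩
  rcases eq_or_ne s 0 with rfl | hs
  · simpa using h0
  · have h1 : ∫ t in (0:ℝ)..1, deriv f (t * s)
        = s⁻¹ • ∫ u in (0*s : ℝ)..(1*s : ℝ), deriv f u :=
      intervalIntegral.integral_comp_mul_right (deriv f) hs
    have hdiff : Differentiable ℝ f := hf.differentiable (by simp)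
    have h2 : (∫ u in (0:ℝ)..s, deriv f u) = f s - f 0 :=
      intervalIntegral.integral_deriv_eq_sub (fun x _ => hdiff.differentiableAt)
        ((hf'.continuous).intervalIntegrable 0 s)
    simp only []
    rw [h1, zero_mul, one_mul, h2, h0, smul_eq_mul]
    field_simp
    simp

lemma itd_const (c : ℝ) (i : ℕ) (x : ℝ) :
    iteratedDeriv (i + 1) (fun _ : ℝ => c) x = 0 := by
  induction i generalizing x with
  | zero => rw [iteratedDeriv_one]; simp
  | succ i ih =>
    rw [iteratedDeriv_succ]
    have : iteratedDeriv (i + 1) (fun _ : ℝ => c) = fun _ => (0:ℝ) := funext fun y => ih y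
    rw [this]; simp

lemma itd_id (i : ℕ) (x : ℝ) :
    iteratedDeriv i (fun s : ℝ => s) x = if i = 0 then x else if i = 1 then 1 else 0 := by
  match i with
  | 0 => simp
  | 1 => rw [iteratedDeriv_one]; simp
  | (i + 2) =>
    rw [iteratedDeriv_succ', show deriv (fun s : ℝ => s) = fun _ : ℝ => (1:ℝ) from funext fun y => by simp]
    simp [itd_const 1 i x]

lemma itd_sq (i : ℕ) (x : ℝ) :
    iteratedDeriv i (fun s : ℝ => s ^ 2) x
      = if i = 0 then x ^ 2 else if i = 1 then 2 * x else if i = 2 then 2 else 0 := by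
  have hd : deriv (fun s : ℝ => s ^ 2) = fun s : ℝ => 2 * s := by
    funext y
    have : HasDerivAt (fun s : ℝ => s ^ 2) (2 * y ^ 1) y := by
      simpa using (hasDerivAt_pow 2 y)
    simpa using this.deriv
  match i with
  | 0 => simp
  | 1 => rw [iteratedDeriv_one, hd]; simp
  | (i + 2) =>
    rw [iteratedDeriv_succ', hd]
    have h2 : iteratedDeriv (i + 1) (fun s : ℝ => 2 * s) x
        = 2 * iteratedDeriv (i + 1) (fun s : ℝ => s) x := by
      rw [← iteratedDerivWithin_univ, ← iteratedDerivWithin_univ]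
      exact iteratedDerivWithin_const_mul (mem_univ x) uniqueDiffOn_univ 2
        (contDiff_id.contDiffWithinAt (s := univ))
    rw [h2, itd_id]
    rcases i with _ | i <;> simp

/-- The Remark following Proposition 2.29: if `a` satisfies the smoothness conditions
(2.9), then `b(s) = √(2 ∫₀ˢ a(τ) dτ)` extends to a smooth function on an open interval
containing `[0, L]` and satisfies the smoothness conditions (2.10). -/
theorem stmt_14 (L : ℝ) (hL : 0 < L) (a : ℝ → ℝ)
    (ha : ContDiff ℝ (⊤ : ℕ∞) a)
    (hapos : ∀ s ∈ Set.Ioo 0 L, 0 < a s)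
    (ha0 : a 0 = 0) (haL : a L = 0)
    (ha0' : deriv a 0 = 1) (haL' : deriv a L = -1)
    (haeven : ∀ k : ℕ, iteratedDeriv (2 * k) a 0 = 0 ∧ iteratedDeriv (2 * k) a L = 0) :
    ∃ (b : ℝ → ℝ) (c d : ℝ), c < 0 ∧ L < d ∧
      ContDiffOn ℝ (⊤ : ℕ∞) b (Set.Ioo c d) ∧
      (∀ s ∈ Set.Icc 0 L, b s = Real.sqrt (2 * ∫ τ in (0:ℝ)..s, a τ)) ∧
      b 0 = 0 ∧ deriv b 0 = 1 ∧
      (∀ k : ℕ, iteratedDeriv (2 * k) b 0 = 0) ∧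
      (∀ k : ℕ, iteratedDeriv (2 * k + 1) b L = 0) ∧
      0 < b L := by
  have haInf : ContDiff ℝ ∞ a := ha
  -- the function g
  set g : ℝ → ℝ := fun s => 2 * ∫ τ in (0:ℝ)..s, a τ with hgdef
  have hP : ∀ s, HasDerivAt (fun u => ∫ τ in (0:ℝ)..u, a τ) (a s) s :=
    fun s => (haInf.continuous.integral_hasStrictDerivAt 0 s).hasDerivAt
  have hgD : ∀ s, HasDerivAt g (2 * a s) s := fun s => (hP s).const_mul 2
  have hgderiv : deriv g = fun s => 2 * a s := funext fun s => (hgD s).deriv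
  have hg : ContDiff ℝ ∞ g := by
    rw [contDiff_infty_iff_deriv]
    exact ⟨fun s => (hgD s).differentiableAt, by
      rw [hgderiv]; exact contDiff_const.mul haInf⟩
  have hg0 : g 0 = 0 := by simp [hgdef]
  have hgitd : ∀ (m : ℕ) (x : ℝ), iteratedDeriv (m + 1) g x = 2 * iteratedDeriv m a x := by
    intro m x
    rw [iteratedDeriv_succ', hgderiv, ← iteratedDerivWithin_univ, ← iteratedDerivWithin_univ]
    exact iteratedDerivWithin_const_mul (mem_univ x) uniqueDiffOn_univ 2
      (haInf.contDiffWithinAt.of_le (by exact_mod_cast le_top))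
  -- Hadamard twice
  obtain ⟨g1, hg1s, hg1⟩ := hadamard hg hg0
  have hg1_0 : g1 0 = 0 := by
    have h1 : HasDerivAt (fun s => s * g1 s) (1 * g1 0 + 0 * deriv g1 0) 0 :=
      (hasDerivAt_id 0).mul (hg1s.differentiable (by simp) 0).hasDerivAt
    have h2 : deriv g 0 = g1 0 := by
      rw [show g = fun s => s * g1 s from funext hg1]
      simpa using h1.deriv
    rw [hgderiv] at h2
    simp only [ha0, mul_zero] at h2
    exact h2.symm
  obtain ⟨h, hhs, hh⟩ := hadamard hg1s hg1_0
  have hsq : ∀ s, g s = s ^ 2 * h s := by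
    intro s; rw [hg1 s, hh s]; ring
  have hgeq : g = fun s => s ^ 2 * h s := funext hsq
  -- derivatives of g at 0 via Leibniz
  have hLg : ∀ m : ℕ, iteratedDeriv m g 0
      = ∑ i ∈ Finset.range (m + 1),
          (m.choose i : ℝ) * (iteratedDeriv i (fun s : ℝ => s ^ 2) 0 * iteratedDeriv (m - i) h 0) := by
    intro m
    rw [hgeq]
    exact leibniz' isOpen_univ ((contDiff_id.pow 2).contDiffOn)
      (hhs.contDiffOn) m (mem_univ 0)
  -- h 0 = 1
  have h0one : h 0 = 1 := by
    have e1 := hLg 2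
    rw [show iteratedDeriv 2 g 0 = 2 * iteratedDeriv 1 a 0 from hgitd 1 0,
      iteratedDeriv_one, ha0'] at e1
    rw [Finset.sum_range_succ, Finset.sum_range_succ, Finset.sum_range_succ,
      Finset.range_zero, Finset.sum_empty] at e1
    simp [itd_sq] at e1
    linarith
  -- odd derivatives of h vanish at 0
  have hodd : ∀ j : ℕ, Odd j → iteratedDeriv j h 0 = 0 := by
    intro j hj
    obtain ⟨k, hk⟩ := hj
    have hg_odd : iteratedDeriv (j + 2) g 0 = 0 := by
      rw [hgitd (j + 1) 0, show j + 1 = 2 * (k + 1) by omega, (haeven (k + 1)).1, mul_zero]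
    have e1 := (hLg (j + 2)).symm.trans hg_odd
    have e2 : ∀ i ∈ Finset.range (j + 3), i ≠ 2 →
        ((j + 2).choose i : ℝ) * (iteratedDeriv i (fun s : ℝ => s ^ 2) 0 * iteratedDeriv (j + 2 - i) h 0) = 0 := by
      intro i _ hi2
      rw [itd_sq]
      rcases Nat.eq_zero_or_pos i with rfl | hipos
      · norm_num
      · rcases Nat.eq_or_lt_of_le hipos with h1 | h2
        · rw [← h1]
          norm_num
        · have h0' : ¬ (i = 0) := by omega
          have h1' : ¬ (i = 1) := by omega
          simp [h0', h1', hi2]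
    rw [Finset.sum_eq_single_of_mem 2 (by simp) e2] at e1
    rw [itd_sq] at e1
    have hC : (j + 2).choose 2 ≠ 0 := (Nat.choose_pos (by omega)).ne'
    norm_num at e1
    rcases e1 with e1 | e1
    · exact absurd e1 hC
    · simpa [show j + 2 - 2 = j by omega] using e1
  -- positivity of h near 0
  have hhc : Continuous h := hhs.continuous
  have hev0 : ∀ᶠ s in 𝓝 (0:ℝ), 0 < h s := by
    have ht : Filter.Tendsto h (𝓝 0) (𝓝 (h 0)) := hhc.continuousAt
    exact ht.eventually (eventually_gt_nhds (by rw [h0one]; norm_num))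
  obtain ⟨ε, hεpos, hball0⟩ := Metric.eventually_nhds_iff.mp hev0
  have hgmono : StrictMonoOn g (Icc 0 L) := by
    apply strictMonoOn_of_deriv_pos (convex_Icc 0 L) hg.continuous.continuousOn
    intro x hx
    rw [interior_Icc] at hx
    rw [hgderiv]
    have := hapos x hx
    dsimp only
    linarith
  have hgLpos : 0 < g L := by
    have := hgmono (left_mem_Icc.2 hL.le) (right_mem_Icc.2 hL.le) hL
    rwa [hg0] at this
  have hevL : ∀ᶠ s in 𝓝 L, 0 < g s := by
    have ht : Filter.Tendsto g (𝓝 L) (𝓝 (g L)) := hg.continuous.continuousAt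
    exact ht.eventually (eventually_gt_nhds hgLpos)
  obtain ⟨δ, hδpos, hballL⟩ := Metric.eventually_nhds_iff.mp hevL
  have hc0 : -ε < 0 := neg_lt_zero.2 hεpos
  have hdL : L < L + δ := lt_add_of_pos_right L hδpos
  have hUopen : IsOpen (Ioo (-ε) (L + δ)) := isOpen_Ioo
  have h0U : (0:ℝ) ∈ Ioo (-ε) (L + δ) := ⟨hc0, by linarith⟩
  have hLU : L ∈ Ioo (-ε) (L + δ) := ⟨by linarith, hdL⟩
  have hhpos : ∀ s ∈ Ioo (-ε) (L + δ), 0 < h s := by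
    intro s hs
    rcases le_or_gt s 0 with hs0 | hs0
    · apply hball0
      rw [Real.dist_eq, sub_zero, abs_of_nonpos hs0]
      linarith [hs.1]
    · have hgs : 0 < g s := by
        rcases le_or_gt s L with hsL | hsL
        · have := hgmono (left_mem_Icc.2 hL.le) ⟨hs0.le, hsL⟩ hs0
          rwa [hg0] at this
        · apply hballL
          rw [Real.dist_eq, abs_of_pos (by linarith : (0:ℝ) < s - L)]
          linarith [hs.2]
      by_contra hle
      push_neg at hle
      have h2 : s ^ 2 * h s ≤ 0 := mul_nonpos_of_nonneg_of_nonpos (sq_nonneg s) hle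
      rw [← hsq s] at h2
      linarith
  set q : ℝ → ℝ := fun s => Real.sqrt (h s) with hqdef
  set b : ℝ → ℝ := fun s => s * q s with hbdef
  have hqU : ContDiffOn ℝ ∞ q (Ioo (-ε) (L + δ)) := fun x hx =>
    ((Real.contDiffAt_sqrt (hhpos x hx).ne').comp x hhs.contDiffAt).contDiffWithinAt
  have hbU : ContDiffOn ℝ ∞ b (Ioo (-ε) (L + δ)) := contDiffOn_id.mul hqU
  have hq0 : q 0 = 1 := by rw [hqdef]; simp [h0one]
  have hqq : ∀ s ∈ Ioo (-ε) (L + δ), q s * q s = h s := fun s hs =>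
    Real.mul_self_sqrt (hhpos s hs).le
  have hqodd : ∀ m : ℕ, Odd m → iteratedDeriv m q 0 = 0 := by
    apply odd_of_sq hUopen hqU h0U (by rw [hq0]; norm_num)
    intro m hm
    have hev : (fun s => q s * q s) =ᶠ[𝓝 (0:ℝ)] h := by
      filter_upwards [hUopen.mem_nhds h0U] with s hs using hqq s hs
    rw [hev.iteratedDeriv_eq m]
    exact hodd m hm
  have hbLpos : 0 < b L := mul_pos hL (Real.sqrt_pos.2 (hhpos L hLU))
  refine ⟨b, -ε, L + δ, hc0, hdL, hbU, ?_, ?_, ?_, ?_, ?_, hbLpos⟩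
  · intro s hs
    rw [show (2 * ∫ τ in (0:ℝ)..s, a τ) = s ^ 2 * h s from hsq s,
      Real.sqrt_mul (sq_nonneg s), Real.sqrt_sq hs.1]
  · simp [hbdef]
  · have hqd : DifferentiableAt ℝ q 0 :=
      ((Real.contDiffAt_sqrt (x := h 0) (by rw [h0one]; norm_num)).comp 0
        hhs.contDiffAt).differentiableAt (by simp)
    have hb : HasDerivAt b (1 * q 0 + 0 * deriv q 0) 0 := (hasDerivAt_id 0).mul hqd.hasDerivAt
    rw [hb.deriv, hq0]
    ring
  · intro k
    rcases Nat.eq_zero_or_pos k with rfl | hk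
    · simp [hbdef]
    · have hlb := leibniz' hUopen (f := fun s : ℝ => s) (g := q) contDiffOn_id hqU (2 * k) h0U
      rw [hbdef, hlb]
      apply Finset.sum_eq_zero
      intro i hi
      rw [itd_id]
      rcases Nat.eq_zero_or_pos i with rfl | hipos
      · norm_num
      · rcases Nat.eq_or_lt_of_le hipos with h1 | h2
        · rw [← h1]
          have : iteratedDeriv (2 * k - 1) q 0 = 0 := hqodd (2 * k - 1) ⟨k - 1, by omega⟩
          simp [this]
        · have h0' : ¬ (i = 0) := by omega
          have h1' : ¬ (i = 1) := by omega
          simp [h0', h1']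
  · have hU'open : IsOpen (Ioo (0:ℝ) (L + δ)) := isOpen_Ioo
    have hLU' : L ∈ Ioo (0:ℝ) (L + δ) := ⟨hL, hdL⟩
    have hbU' : ContDiffOn ℝ ∞ b (Ioo (0:ℝ) (L + δ)) :=
      hbU.mono (fun x hx => ⟨by linarith [hx.1], hx.2⟩)
    have hbb := odd_of_sq hU'open hbU' hLU' hbLpos.ne' ?_
    · exact fun k => hbb (2 * k + 1) ⟨k, rfl⟩
    · intro m hm
      have hev : (fun s => b s * b s) =ᶠ[𝓝 L] g := by
        filter_upwards [hU'open.mem_nhds hLU'] with s hs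
        have hsU : s ∈ Ioo (-ε) (L + δ) := ⟨by linarith [hs.1], hs.2⟩
        calc b s * b s = s ^ 2 * (q s * q s) := by rw [hbdef]; ring
          _ = s ^ 2 * h s := by rw [hqq s hsU]
          _ = g s := (hsq s).symm
      rw [hev.iteratedDeriv_eq m]
      obtain ⟨k, hk⟩ := hm
      rw [show m = 2 * k + 1 from by omega, hgitd (2 * k) L, (haeven k).2, mul_zero]
end
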